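/- arXiv:2505.08901 — 7 statements merged into one kernel-verified Lean document; each statement's English description precedes it below -/
import Mathlib

section
/- Let (X, 𝒜, μ) be a probability space and (E_i)_{i∈ℕ} a sequence of measurable sets with ∑_{i=1}^∞ μ(E_i) = ∞. Suppose there exists C > 0 such that ∑_{s,t=1}^Q μ(E_s ∩ E_t) ≤ C·(∑_{s=1}^Q μ(E_s))² for infinitely many Q ∈ ℕ. Then μ(limsup_{i→∞} E_i) ≥ 1/C. -/
open MeasureTheory Filter Set
open scoped ENNReal NNReal Topology

/-- Chung–Erdős inequality (Cauchy–Schwarz step):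
`(∑ μ(E s))² ≤ μ(⋃ E s) * ∑∑ μ(E s ∩ E t)`. -/
lemma chung_erdos_cauchy_schwarz {X : Type*} [MeasurableSpace X]
    (μ : Measure X) (E : ℕ → Set X) (hmeas : ∀ i, MeasurableSet (E i)) (F : Finset ℕ) :
    (∑ s ∈ F, μ (E s)) ^ 2 ≤
      μ (⋃ s ∈ F, E s) * ∑ s ∈ F, ∑ t ∈ F, μ (E s ∩ E t) := by
  set U : Set X := ⋃ s ∈ F, E s with hUdef
  have hU : MeasurableSet U := F.measurableSet_biUnion (fun s _ => hmeas s)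
  set f : X → ℝ≥0∞ := fun x => ∑ s ∈ F, (E s).indicator 1 x with hfdef
  have hms : ∀ s : ℕ, Measurable ((E s).indicator (1 : X → ℝ≥0∞)) :=
    fun s => measurable_one.indicator (hmeas s)
  have hfm : Measurable f := Finset.measurable_sum _ fun s _ => hms s
  have h1 : ∫⁻ x, f x ∂μ = ∑ s ∈ F, μ (E s) := by
    rw [hfdef]
    rw [lintegral_finset_sum _ fun s _ => hms s]
    refine Finset.sum_congr rfl fun s _ => ?_
    rw [lintegral_indicator (hmeas s)]
    simp
  have h2 : ∫⁻ x, f x ^ (2:ℝ) ∂μ = ∑ s ∈ F, ∑ t ∈ F, μ (E s ∩ E t) := by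
    have hsq : ∀ x, f x ^ (2:ℝ) = ∑ s ∈ F, ∑ t ∈ F, (E s ∩ E t).indicator 1 x := by
      intro x
      rw [ENNReal.rpow_two, sq, hfdef, Finset.sum_mul_sum]
      refine Finset.sum_congr rfl fun s _ => Finset.sum_congr rfl fun t _ => ?_
      rw [← Set.inter_indicator_mul]
      simp [Set.indicator]
    simp_rw [hsq]
    rw [lintegral_finset_sum _ fun s _ =>
      Finset.measurable_sum _ fun t _ => measurable_one.indicator ((hmeas s).inter (hmeas t))]
    refine Finset.sum_congr rfl fun s _ => ?_
    rw [lintegral_finset_sum _ fun t _ => measurable_one.indicator ((hmeas s).inter (hmeas t))]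
    refine Finset.sum_congr rfl fun t _ => ?_
    rw [lintegral_indicator ((hmeas s).inter (hmeas t))]
    simp
  have h3 : ∀ x, f x = f x * U.indicator 1 x := by
    intro x
    by_cases hx : x ∈ U
    · simp [hx]
    · have hfx : f x = 0 := by
        rw [hfdef]
        refine Finset.sum_eq_zero fun s hs => ?_
        have : x ∉ E s := fun h => hx (Set.mem_biUnion hs h)
        simp [Set.indicator_of_notMem this]
      simp [hfx]
  have hconj : Real.HolderConjugate 2 2 := Real.HolderConjugate.two_two
  have holder := ENNReal.lintegral_mul_le_Lp_mul_Lq μ hconj hfm.aemeasurable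
    ((measurable_one.indicator hU).aemeasurable : AEMeasurable (U.indicator (1 : X → ℝ≥0∞)) μ)
  have hind : ∫⁻ x, U.indicator (1 : X → ℝ≥0∞) x ^ (2:ℝ) ∂μ = μ U := by
    have : ∀ x, U.indicator (1 : X → ℝ≥0∞) x ^ (2:ℝ) = U.indicator 1 x := by
      intro x
      by_cases hx : x ∈ U <;> simp [hx, ENNReal.rpow_two]
    simp_rw [this]
    rw [lintegral_indicator hU]; simp
  have hmul' : (∫⁻ x, (f * U.indicator (1 : X → ℝ≥0∞)) x ∂μ) = ∫⁻ x, f x ∂μ :=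
    lintegral_congr fun x => by simp only [Pi.mul_apply]; exact (h3 x).symm
  calc (∑ s ∈ F, μ (E s)) ^ 2
      = (∫⁻ x, (f * U.indicator (1 : X → ℝ≥0∞)) x ∂μ) ^ 2 := by rw [hmul', h1]
    _ ≤ ((∫⁻ x, f x ^ (2:ℝ) ∂μ) ^ (1/(2:ℝ)) * (∫⁻ x, U.indicator (1:X→ℝ≥0∞) x ^ (2:ℝ) ∂μ) ^ (1/(2:ℝ))) ^ 2 := by
        exact pow_le_pow_left' holder 2
    _ = (∫⁻ x, f x ^ (2:ℝ) ∂μ) * (∫⁻ x, U.indicator (1:X→ℝ≥0∞) x ^ (2:ℝ) ∂μ) := by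
        rw [mul_pow, ← ENNReal.rpow_natCast (_ ^ (1/(2:ℝ))) 2, ← ENNReal.rpow_natCast (_ ^ (1/(2:ℝ))) 2,
          ← ENNReal.rpow_mul, ← ENNReal.rpow_mul]
        norm_num
    _ = μ U * ∑ s ∈ F, ∑ t ∈ F, μ (E s ∩ E t) := by rw [h2, hind, mul_comm]

theorem refined_divergence_borel_cantelli {X : Type*} [MeasurableSpace X]
    (μ : Measure X) [IsProbabilityMeasure μ] (E : ℕ → Set X)
    (hmeas : ∀ i, MeasurableSet (E i))
    (hdiv : ∑' i, μ (E i) = ⊤)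
    (C : ℝ) (hC : 0 < C)
    (hquasi : {Q : ℕ | ∑ s ∈ Finset.Icc 1 Q, ∑ t ∈ Finset.Icc 1 Q, μ (E s ∩ E t) ≤
        ENNReal.ofReal C * (∑ s ∈ Finset.Icc 1 Q, μ (E s)) ^ 2}.Infinite) :
    μ {x | {i : ℕ | x ∈ E i}.Infinite} ≥ ENNReal.ofReal (1 / C) := by
  set S : Set ℕ := {Q : ℕ | ∑ s ∈ Finset.Icc 1 Q, ∑ t ∈ Finset.Icc 1 Q, μ (E s ∩ E t) ≤
        ENNReal.ofReal C * (∑ s ∈ Finset.Icc 1 Q, μ (E s)) ^ 2} with hSdef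
  set A : ℕ → ℝ≥0∞ := fun Q => ∑ s ∈ Finset.Icc 1 Q, μ (E s) with hAdef
  have hAfin : ∀ Q, A Q ≠ ⊤ := fun Q =>
    (ENNReal.sum_lt_top.2 fun s _ => measure_lt_top μ (E s)).ne
  have hAmono : Monotone A := fun a b h =>
    Finset.sum_le_sum_of_subset (Finset.Icc_subset_Icc_right h)
  -- A tends to ⊤
  have hAsup : ⨆ Q, A Q = ⊤ := by
    by_contra h
    have hlt : (⨆ Q, A Q) < ⊤ := lt_top_iff_ne_top.2 h
    have hle : ∑' i, μ (E i) ≤ μ (E 0) + ⨆ Q, A Q := by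
      rw [ENNReal.tsum_eq_iSup_nat]
      refine iSup_le fun n => ?_
      have hsubset : Finset.range n ⊆ insert 0 (Finset.Icc 1 n) := by
        intro i hi
        simp only [Finset.mem_range] at hi
        simp only [Finset.mem_insert, Finset.mem_Icc]
        omega
      calc ∑ i ∈ Finset.range n, μ (E i)
          ≤ ∑ i ∈ insert 0 (Finset.Icc 1 n), μ (E i) :=
            Finset.sum_le_sum_of_subset hsubset
        _ = μ (E 0) + A n := by
            rw [Finset.sum_insert (by simp)]
        _ ≤ μ (E 0) + ⨆ Q, A Q := add_le_add_right (le_iSup A n) _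
    rw [hdiv] at hle
    exact absurd (lt_of_le_of_lt hle (ENNReal.add_lt_top.2 ⟨measure_lt_top μ _, hlt⟩))
      (lt_irrefl ⊤)
  have hAtop : Tendsto A atTop (𝓝 ⊤) := hAsup ▸ tendsto_atTop_iSup hAmono
  -- the filter along S
  have hfreq : ∃ᶠ Q in atTop, Q ∈ S := Nat.frequently_atTop_iff_infinite.2 hquasi
  have hL : (atTop ⊓ 𝓟 S).NeBot := frequently_iff_neBot.mp hfreq
  set L : Filter ℕ := atTop ⊓ 𝓟 S with hLdef
  -- tail unions
  set T : ℕ → Set X := fun n => ⋃ i ∈ {i : ℕ | n < i}, E i with hTdef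
  have hTmeas : ∀ n, MeasurableSet (T n) :=
    fun n => MeasurableSet.biUnion (Set.to_countable _) fun i _ => hmeas i
  have hTanti : Antitone T := fun a b hab =>
    Set.biUnion_subset_biUnion_left fun i (hi : b < i) => lt_of_le_of_lt hab hi
  have hset : {x | {i : ℕ | x ∈ E i}.Infinite} = ⋂ n, T n := by
    ext x
    simp only [Set.mem_setOf_eq, Set.mem_iInter, hTdef, Set.mem_iUnion, exists_prop]
    constructor
    · intro h n
      obtain ⟨i, hi, hlt⟩ := h.exists_gt n
      exact ⟨i, hlt, hi⟩
    · intro h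
      refine Set.infinite_of_not_bddAbove ?_
      rintro ⟨b, hb⟩
      obtain ⟨i, hlt, hx⟩ := h b
      exact absurd (hb hx) (not_le.2 hlt)
  rw [ge_iff_le, hset,
    Antitone.measure_iInter hTanti (fun n => (hTmeas n).nullMeasurableSet)
      ⟨0, measure_ne_top μ _⟩]
  refine le_iInf fun n => ?_
  -- key inequality for Q ∈ S, n ≤ Q
  set b : ℝ := (A n).toReal with hbdef
  set m : ℝ := (μ (T n)).toReal with hmdef
  have hm0 : 0 ≤ m := ENNReal.toReal_nonneg
  have key : ∀ Q, Q ∈ S → n ≤ Q →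
      ((A Q).toReal - b) ^ 2 ≤ m * (C * (A Q).toReal ^ 2) := by
    intro Q hQ hn
    have hsum : A n + ∑ s ∈ Finset.Icc (n+1) Q, μ (E s) = A Q := by
      rw [hAdef]
      beta_reduce
      have h1 : Finset.Icc 1 n = Finset.Ioc 0 n := by rw [← Finset.Icc_add_one_left_eq_Ioc]; rfl
      have h2 : Finset.Icc (n+1) Q = Finset.Ioc n Q := by rw [← Finset.Icc_add_one_left_eq_Ioc]
      have h3 : Finset.Icc 1 Q = Finset.Ioc 0 Q := by rw [← Finset.Icc_add_one_left_eq_Ioc]; rfl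
      rw [h1, h2, h3]
      exact Finset.sum_Ioc_consecutive _ (Nat.zero_le n) hn
    have hsub : (∑ s ∈ Finset.Icc (n+1) Q, μ (E s)) = A Q - A n := by
      rw [← hsum]; rw [ENNReal.add_sub_cancel_left (hAfin n)]
    have hCS := chung_erdos_cauchy_schwarz μ E hmeas (Finset.Icc (n+1) Q)
    have hUsub : (⋃ s ∈ Finset.Icc (n+1) Q, E s) ⊆ T n := by
      refine Set.iUnion₂_subset fun s hs => ?_
      have : n < s := by
        have := (Finset.mem_Icc.mp hs).1; omega
      exact Set.subset_biUnion_of_mem this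
    have hdsub : ∑ s ∈ Finset.Icc (n+1) Q, ∑ t ∈ Finset.Icc (n+1) Q, μ (E s ∩ E t) ≤
        ∑ s ∈ Finset.Icc 1 Q, ∑ t ∈ Finset.Icc 1 Q, μ (E s ∩ E t) := by
      have hsub' : Finset.Icc (n+1) Q ⊆ Finset.Icc 1 Q :=
        Finset.Icc_subset_Icc (by omega) le_rfl
      calc ∑ s ∈ Finset.Icc (n+1) Q, ∑ t ∈ Finset.Icc (n+1) Q, μ (E s ∩ E t)
          ≤ ∑ s ∈ Finset.Icc (n+1) Q, ∑ t ∈ Finset.Icc 1 Q, μ (E s ∩ E t) :=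
            Finset.sum_le_sum fun s _ => Finset.sum_le_sum_of_subset hsub'
        _ ≤ ∑ s ∈ Finset.Icc 1 Q, ∑ t ∈ Finset.Icc 1 Q, μ (E s ∩ E t) :=
            Finset.sum_le_sum_of_subset hsub'
    have hkey : (A Q - A n) ^ 2 ≤ μ (T n) * (ENNReal.ofReal C * A Q ^ 2) := by
      calc (A Q - A n) ^ 2 = (∑ s ∈ Finset.Icc (n+1) Q, μ (E s)) ^ 2 := by rw [hsub]
        _ ≤ μ (⋃ s ∈ Finset.Icc (n+1) Q, E s) *
            ∑ s ∈ Finset.Icc (n+1) Q, ∑ t ∈ Finset.Icc (n+1) Q, μ (E s ∩ E t) := hCS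
        _ ≤ μ (T n) * ∑ s ∈ Finset.Icc 1 Q, ∑ t ∈ Finset.Icc 1 Q, μ (E s ∩ E t) :=
            mul_le_mul' (measure_mono hUsub) hdsub
        _ ≤ μ (T n) * (ENNReal.ofReal C * A Q ^ 2) := mul_le_mul_right hQ _
    -- convert to reals
    have hRfin : μ (T n) * (ENNReal.ofReal C * A Q ^ 2) ≠ ⊤ :=
      ENNReal.mul_ne_top (measure_ne_top μ _)
        (ENNReal.mul_ne_top ENNReal.ofReal_ne_top (by
          exact ENNReal.pow_ne_top (hAfin Q)))
    have := ENNReal.toReal_mono hRfin hkey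
    rw [ENNReal.toReal_pow, ENNReal.toReal_sub_of_le (hAmono hn) (hAfin Q),
      ENNReal.toReal_mul, ENNReal.toReal_mul, ENNReal.toReal_ofReal hC.le,
      ENNReal.toReal_pow] at this
    exact this
  -- pass to the limit along L
  have hu : Tendsto (fun Q => (A Q).toReal) L atTop := by
    have h1 : Tendsto (fun Q => (A Q).toReal) atTop atTop := by
      rw [tendsto_atTop]
      intro M
      have h2 : ∀ᶠ Q in atTop, (M.toNNReal : ℝ≥0∞) < A Q :=
        (ENNReal.tendsto_nhds_top_iff_nnreal.mp hAtop) M.toNNReal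
      filter_upwards [h2] with Q hQ
      calc M ≤ (M.toNNReal : ℝ) := Real.le_coe_toNNReal M
        _ ≤ (A Q).toReal := by
            rw [← ENNReal.coe_toReal]
            exact ENNReal.toReal_mono (hAfin Q) hQ.le
    exact h1.mono_left inf_le_left
  have hmemS : ∀ᶠ Q in L, Q ∈ S := by
    rw [hLdef, eventually_inf_principal]
    exact Eventually.of_forall fun _ h => h
  have hgen : ∀ᶠ Q in L, n ≤ Q := (eventually_ge_atTop n).filter_mono inf_le_left
  have hupos : ∀ᶠ Q in L, 0 < (A Q).toReal := hu.eventually_gt_atTop 0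
  have hev : ∀ᶠ Q in L, (1 - b / (A Q).toReal) ^ 2 / C ≤ m := by
    filter_upwards [hmemS, hgen, hupos] with Q hQS hQn hQpos
    set u : ℝ := (A Q).toReal
    have hk := key Q hQS hQn
    have h1 : 1 - b / u = (u - b) / u := one_sub_div (ne_of_gt hQpos)
    rw [h1, div_pow, div_div]
    rw [div_le_iff₀ (by positivity)]
    calc (u - b) ^ 2 ≤ m * (C * u ^ 2) := hk
      _ = m * (u ^ 2 * C) := by ring
  have hlim : Tendsto (fun Q => (1 - b / (A Q).toReal) ^ 2 / C) L (𝓝 (1 / C)) := by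
    have h0 : Tendsto (fun Q => b / (A Q).toReal) L (𝓝 0) :=
      tendsto_const_nhds.div_atTop hu
    have h1 : Tendsto (fun Q => (1 - b / (A Q).toReal) ^ 2) L (𝓝 1) := by
      have := ((tendsto_const_nhds (x := (1:ℝ))).sub h0).pow 2
      simpa using this
    simpa using h1.div_const C
  have hfin : 1 / C ≤ m := le_of_tendsto hlim hev
  exact ENNReal.ofReal_le_of_le_toReal hfin
end

section
/- For all real numbers x, t ≥ 1 and every real c, the number of positive integers n ≤ x such that ∑_{p | n, p ≥ t} 1/p ≥ c is at most K·x·e^{-100·c·t} for some absolute constant K, where the sum is over prime divisors p of n with p ≥ t. -/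
open Finset

lemma aux_exp_sub_one_le (y : ℝ) : Real.exp y - 1 ≤ y * Real.exp y := by
  have h1 := Real.add_one_le_exp (-y)
  have h2 : Real.exp (-y) * Real.exp y = 1 := by rw [← Real.exp_add]; simp
  nlinarith [Real.exp_pos y]

lemma aux_sum_inv_sq (m M : ℕ) (hm : 1 ≤ m) :
    ∑ k ∈ Icc m M, ((k : ℝ) ^ 2)⁻¹ ≤ 2 / m := by
  have h1 : Icc m M ⊆ Ioo (m - 1) (M + 1) := by
    intro k hk
    simp only [mem_Icc] at hk
    simp only [mem_Ioo]
    omega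
  calc ∑ k ∈ Icc m M, ((k : ℝ) ^ 2)⁻¹
      ≤ ∑ k ∈ Ioo (m - 1) (M + 1), ((k : ℝ) ^ 2)⁻¹ := by
        apply sum_le_sum_of_subset_of_nonneg h1
        intro i _ _; positivity
    _ ≤ 2 / ((m - 1 : ℕ) + 1) := sum_Ioo_inv_sq_le _ _
    _ = 2 / m := by
        congr 1
        have : ((m - 1 : ℕ) : ℝ) = (m : ℝ) - 1 := by rw [Nat.cast_sub hm]; simp
        rw [this]; ring

theorem unweighted_anatomy :
    ∃ K : ℝ, 0 < K ∧ ∀ (x t : ℝ), 1 ≤ x → 1 ≤ t → ∀ c : ℝ,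
      (Nat.card {n : ℕ | 1 ≤ n ∧ (n : ℝ) ≤ x ∧
          c ≤ ∑ p ∈ n.primeFactors.filter (fun p : ℕ => t ≤ (p : ℝ)), (1 / (p : ℝ))} : ℝ) ≤
        K * x * Real.exp (-100 * c * t) := by
  refine ⟨Real.exp (200 * Real.exp 100), Real.exp_pos _, ?_⟩
  intro x t hx ht c
  have hx0 : (0:ℝ) ≤ x := by linarith
  have ht0 : (0:ℝ) < t := by linarith
  set N := ⌊x⌋₊ with hNdef
  have hNx : (N : ℝ) ≤ x := Nat.floor_le hx0
  set S : ℕ → Finset ℕ := fun n => n.primeFactors.filter (fun p : ℕ => t ≤ (p:ℝ)) with hS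
  set F : Finset ℕ := (Icc 1 N).filter (fun n => c ≤ ∑ p ∈ S n, (1 / (p:ℝ))) with hF
  have hset : {n : ℕ | 1 ≤ n ∧ (n:ℝ) ≤ x ∧ c ≤ ∑ p ∈ S n, (1/(p:ℝ))} = ↑F := by
    ext n
    simp only [hF, Set.mem_setOf_eq, coe_filter, mem_Icc, Set.mem_setOf_eq]
    constructor
    · rintro ⟨h1, h2, h3⟩; exact ⟨⟨h1, Nat.le_floor h2⟩, h3⟩
    · rintro ⟨⟨h1, h2⟩, h3⟩
      exact ⟨h1, le_trans (by exact_mod_cast Nat.cast_le.mpr h2) hNx, h3⟩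
  rw [hset, Nat.card_coe_set_eq, Set.ncard_coe_finset]
  -- weight function
  set h : ℕ → ℝ := fun p => Real.exp (100*t/p) - 1 with hh
  have hh0 : ∀ p : ℕ, 0 ≤ h p := by
    intro p
    simp only [hh, sub_nonneg]
    exact Real.one_le_exp (by positivity)
  have hW : ∀ n : ℕ, Real.exp (100*t*∑ p ∈ S n, (1/(p:ℝ))) = ∏ p ∈ S n, Real.exp (100*t/(p:ℝ)) := by
    intro n
    rw [mul_sum, Real.exp_sum]
    exact prod_congr rfl fun p _ => by rw [mul_one_div]
  -- Rankin step
  have step1 : (F.card : ℝ) ≤ Real.exp (-100*c*t) *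
      ∑ n ∈ Icc 1 N, ∏ p ∈ S n, Real.exp (100*t/(p:ℝ)) := by
    rw [mul_sum]
    calc (F.card : ℝ) = ∑ _n ∈ F, (1:ℝ) := by simp
      _ ≤ ∑ n ∈ F, Real.exp (-100*c*t) * ∏ p ∈ S n, Real.exp (100*t/(p:ℝ)) := by
          apply sum_le_sum
          intro n hn
          have hc : c ≤ ∑ p ∈ S n, (1/(p:ℝ)) := (mem_filter.1 hn).2
          rw [← hW n, ← Real.exp_add]
          apply Real.one_le_exp
          nlinarith [mul_le_mul_of_nonneg_left hc (by positivity : (0:ℝ) ≤ 100*t)]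
      _ ≤ ∑ n ∈ Icc 1 N, Real.exp (-100*c*t) * ∏ p ∈ S n, Real.exp (100*t/(p:ℝ)) := by
          apply sum_le_sum_of_subset_of_nonneg (filter_subset _ _)
          intro i _ _
          positivity
  -- the prime set
  set P : Finset ℕ := (Icc 1 N).filter (fun p => p.Prime ∧ t ≤ (p:ℝ)) with hP
  have hSP : ∀ n ∈ Icc 1 N, S n ⊆ P := by
    intro n hn p hp
    simp only [hS, mem_filter, Nat.mem_primeFactors] at hp
    obtain ⟨⟨hpp, hpn, hn0⟩, hpt⟩ := hp
    simp only [hP, mem_filter, mem_Icc]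
    exact ⟨⟨hpp.one_lt.le, le_trans (Nat.le_of_dvd (Nat.pos_of_ne_zero hn0) hpn)
      (mem_Icc.1 hn).2⟩, hpp, hpt⟩
  have expand : ∀ n : ℕ, ∏ p ∈ S n, Real.exp (100*t/(p:ℝ)) =
      ∑ D ∈ (S n).powerset, ∏ p ∈ D, h p := by
    intro n
    have e1 : ∀ p ∈ S n, Real.exp (100*t/(p:ℝ)) = h p + 1 := fun p _ => by simp [hh]
    rw [prod_congr rfl e1, prod_add]
    exact sum_congr rfl fun D _ => by simp
  have step2 : ∀ n ∈ Icc 1 N, ∑ D ∈ (S n).powerset, ∏ p ∈ D, h p ≤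
      ∑ D ∈ P.powerset, if (∏ p ∈ D, p) ∣ n then ∏ p ∈ D, h p else 0 := by
    intro n hn
    have h1 : ∀ D ∈ (S n).powerset, ∏ p ∈ D, h p =
        if (∏ p ∈ D, p) ∣ n then ∏ p ∈ D, h p else 0 := by
      intro D hD
      rw [if_pos]
      apply Finset.prod_primes_dvd
      · intro p hp
        exact (Nat.prime_of_mem_primeFactors (mem_filter.1 (mem_powerset.1 hD hp)).1).prime
      · intro p hp
        exact Nat.dvd_of_mem_primeFactors (mem_filter.1 (mem_powerset.1 hD hp)).1
    rw [sum_congr rfl h1]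
    apply sum_le_sum_of_subset_of_nonneg (powerset_mono.2 (hSP n hn))
    intro D _ _
    split_ifs
    · exact prod_nonneg fun p _ => hh0 p
    · exact le_refl 0
  have hIcc : Icc 1 N = Ioc 0 N := by ext k; simp [mem_Icc, mem_Ioc]; omega
  -- swap the sums
  have step3 : ∑ n ∈ Icc 1 N, ∑ D ∈ P.powerset, (if (∏ p ∈ D, p) ∣ n then ∏ p ∈ D, h p else 0)
      = ∑ D ∈ P.powerset, (∏ p ∈ D, h p) *
          (((Icc 1 N).filter (fun n => (∏ p ∈ D, p) ∣ n)).card : ℝ) := by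
    rw [sum_comm]
    refine sum_congr rfl fun D _ => ?_
    rw [← sum_filter, sum_const, nsmul_eq_mul, mul_comm]
  have hdpos : ∀ D ∈ P.powerset, 0 < ∏ p ∈ D, p := by
    intro D hD
    apply prod_pos
    intro p hp
    exact (mem_filter.1 (mem_powerset.1 hD hp)).2.1.pos
  have hdiv : ∀ D ∈ P.powerset,
      (((Icc 1 N).filter (fun n => (∏ p ∈ D, p) ∣ n)).card : ℝ) ≤ x / (∏ p ∈ D, (p:ℝ)) := by
    intro D hD
    have hcard : ((Icc 1 N).filter (fun n => (∏ p ∈ D, p) ∣ n)).card = N / (∏ p ∈ D, p) := by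
      rw [hIcc]
      exact Nat.Ioc_filter_dvd_card_eq_div N _
    rw [hcard]
    have h2 : ((∏ p ∈ D, p : ℕ) : ℝ) = ∏ p ∈ D, (p:ℝ) := by push_cast; rfl
    calc ((N / (∏ p ∈ D, p) : ℕ) : ℝ) ≤ (N : ℝ) / ((∏ p ∈ D, p : ℕ) : ℝ) := Nat.cast_div_le
      _ ≤ x / (∏ p ∈ D, (p:ℝ)) := by
          rw [h2]
          gcongr
  -- sum over subsets bound
  have hppos : ∀ p ∈ P, (0:ℝ) < p := by
    intro p hp
    exact_mod_cast (mem_filter.1 hp).2.1.pos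
  have step4 : ∑ D ∈ P.powerset, (∏ p ∈ D, h p) * (x / ∏ p ∈ D, (p:ℝ))
      = x * ∏ p ∈ P, (h p / p + 1) := by
    rw [prod_add]
    rw [mul_sum]
    refine sum_congr rfl fun D hD => ?_
    rw [prod_const_one, mul_one, prod_div_distrib]
    have : ∏ p ∈ D, (p:ℝ) ≠ 0 := by
      apply prod_ne_zero_iff.2
      intro p hp
      exact ne_of_gt (hppos p (mem_powerset.1 hD hp))
    field_simp
  -- bound the Euler product
  have hPsub : P ⊆ Icc ⌈t⌉₊ N := by
    intro p hp
    simp only [hP, mem_filter, mem_Icc] at hp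
    exact mem_Icc.2 ⟨Nat.ceil_le.2 hp.2.2, hp.1.2⟩
  have sum_bound : ∑ p ∈ P, h p / p ≤ 200 * Real.exp 100 := by
    have hterm : ∀ p ∈ P, h p / p ≤ (100 * Real.exp 100 * t) * ((p:ℝ)^2)⁻¹ := by
      intro p hp
      have hp1 : (1:ℝ) ≤ p := by
        have := (mem_filter.1 hp).2.1.one_lt
        exact_mod_cast this.le
      have hp0 : (0:ℝ) < p := by linarith
      have htp : t ≤ (p:ℝ) := (mem_filter.1 hp).2.2
      have hyle : 100*t/(p:ℝ) ≤ 100 := by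
        rw [div_le_iff₀ hp0]; nlinarith
      have h1 : h p ≤ (100*t/(p:ℝ)) * Real.exp 100 := by
        calc h p ≤ (100*t/(p:ℝ)) * Real.exp (100*t/(p:ℝ)) := aux_exp_sub_one_le _
          _ ≤ (100*t/(p:ℝ)) * Real.exp 100 := by
              apply mul_le_mul_of_nonneg_left (Real.exp_le_exp.2 hyle) (by positivity)
      calc h p / p ≤ ((100*t/(p:ℝ)) * Real.exp 100) / p := by
            apply div_le_div_of_nonneg_right h1 hp0.le
        _ = (100 * Real.exp 100 * t) * ((p:ℝ)^2)⁻¹ := by field_simp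
    calc ∑ p ∈ P, h p / p ≤ ∑ p ∈ P, (100 * Real.exp 100 * t) * ((p:ℝ)^2)⁻¹ :=
          sum_le_sum hterm
      _ = (100 * Real.exp 100 * t) * ∑ p ∈ P, ((p:ℝ)^2)⁻¹ := by rw [mul_sum]
      _ ≤ (100 * Real.exp 100 * t) * (2 / t) := by
          apply mul_le_mul_of_nonneg_left _ (by positivity)
          calc ∑ p ∈ P, ((p:ℝ)^2)⁻¹ ≤ ∑ k ∈ Icc ⌈t⌉₊ N, ((k:ℝ)^2)⁻¹ := by
                apply sum_le_sum_of_subset_of_nonneg hPsub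
                intro i _ _; positivity
            _ ≤ 2 / (⌈t⌉₊:ℝ) := aux_sum_inv_sq _ _ (Nat.one_le_ceil_iff.2 ht0)
            _ ≤ 2 / t := by
                gcongr
                exact Nat.le_ceil t
      _ = 200 * Real.exp 100 := by field_simp; ring
  have euler : ∏ p ∈ P, (h p / p + 1) ≤ Real.exp (200 * Real.exp 100) := by
    calc ∏ p ∈ P, (h p / p + 1) ≤ ∏ p ∈ P, Real.exp (h p / p) := by
          apply prod_le_prod
          · intro p hp
            have := hh0 p
            have := (hppos p hp)
            positivity
          · intro p hp
            exact Real.add_one_le_exp _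
      _ = Real.exp (∑ p ∈ P, h p / p) := (Real.exp_sum _ _).symm
      _ ≤ Real.exp (200 * Real.exp 100) := Real.exp_le_exp.2 sum_bound
  -- put it together
  have main : ∑ n ∈ Icc 1 N, ∏ p ∈ S n, Real.exp (100*t/(p:ℝ)) ≤
      Real.exp (200 * Real.exp 100) * x := by
    calc ∑ n ∈ Icc 1 N, ∏ p ∈ S n, Real.exp (100*t/(p:ℝ))
        ≤ ∑ n ∈ Icc 1 N, ∑ D ∈ P.powerset, (if (∏ p ∈ D, p) ∣ n then ∏ p ∈ D, h p else 0) := by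
          apply sum_le_sum
          intro n hn
          rw [expand n]
          exact step2 n hn
      _ = ∑ D ∈ P.powerset, (∏ p ∈ D, h p) *
            (((Icc 1 N).filter (fun n => (∏ p ∈ D, p) ∣ n)).card : ℝ) := step3
      _ ≤ ∑ D ∈ P.powerset, (∏ p ∈ D, h p) * (x / ∏ p ∈ D, (p:ℝ)) := by
          apply sum_le_sum
          intro D hD
          exact mul_le_mul_of_nonneg_left (hdiv D hD) (prod_nonneg fun p _ => hh0 p)
      _ = x * ∏ p ∈ P, (h p / p + 1) := step4
      _ ≤ x * Real.exp (200 * Real.exp 100) := by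
          exact mul_le_mul_of_nonneg_left euler hx0
      _ = Real.exp (200 * Real.exp 100) * x := by ring
  calc (F.card : ℝ) ≤ Real.exp (-100*c*t) *
        ∑ n ∈ Icc 1 N, ∏ p ∈ S n, Real.exp (100*t/(p:ℝ)) := step1
    _ ≤ Real.exp (-100*c*t) * (Real.exp (200 * Real.exp 100) * x) := by
        exact mul_le_mul_of_nonneg_left main (Real.exp_pos _).le
    _ = Real.exp (200 * Real.exp 100) * x * Real.exp (-100 * c * t) := by ring
end

section
/- For every positive integer M, every real t ≥ 1 and every real c, we have ∑ φ(n) ≤ K·M·e^{-100·c·t} for some absolute constant K, where the sum ranges over factorizations M = m·n with ∑_{p | m, p ≥ t} 1/p ≥ c. -/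
open Finset

lemma aux_filter (M d : ℕ) (hM : M ≠ 0) (hd : d ∣ M) :
    M.divisors.filter (fun n => d ∣ M / n) = (M / d).divisors := by
  have hd0 : d ≠ 0 := by rintro rfl; exact hM (zero_dvd_iff.mp hd)
  have hMd : M / d ≠ 0 := Nat.div_ne_zero_iff.mpr ⟨hd0, Nat.le_of_dvd (Nat.pos_of_ne_zero hM) hd⟩
  ext n
  simp only [mem_filter, Nat.mem_divisors]
  constructor
  · rintro ⟨⟨hn, -⟩, hdn⟩
    refine ⟨?_, hMd⟩
    rw [Nat.dvd_div_iff_mul_dvd hd]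
    rw [Nat.dvd_div_iff_mul_dvd hn] at hdn
    exact (mul_comm n d) ▸ hdn
  · rintro ⟨hn, -⟩
    have h1 : d * n ∣ M := (Nat.dvd_div_iff_mul_dvd hd).mp hn
    have h2 : n ∣ M := dvd_of_mul_left_dvd h1
    exact ⟨⟨h2, hM⟩, (Nat.dvd_div_iff_mul_dvd h2).mpr (mul_comm d n ▸ h1)⟩

-- sum of inverse squares over a set of naturals all ≥ t and ≥ 2, elements divide M
lemma aux_invsq (M : ℕ) (hM : 0 < M) (t : ℝ) (ht : 1 ≤ t) (F : Finset ℕ)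
    (hF : ∀ p ∈ F, Nat.Prime p ∧ t ≤ (p:ℝ) ∧ p ∣ M) :
    ∑ p ∈ F, ((p:ℝ)^2)⁻¹ ≤ 2 / t := by
  set k : ℕ := max (⌈t⌉₊ - 1) 1 with hk
  set N : ℕ := max M k with hN
  have hc1 : 1 ≤ ⌈t⌉₊ := Nat.one_le_ceil_iff.mpr (by linarith)
  have hFsub : F ⊆ Finset.Ioc k N := by
    intro p hp
    obtain ⟨hprime, htp, hdvd⟩ := hF p hp
    rw [mem_Ioc]
    refine ⟨max_lt ?_ hprime.one_lt, le_trans (Nat.le_of_dvd hM hdvd) (le_max_left _ _)⟩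
    have : ⌈t⌉₊ ≤ p := Nat.ceil_le.mpr htp
    omega
  have hk0 : k ≠ 0 := by omega
  have hkt : t ≤ 2 * k := by
    have h1 : ((⌈t⌉₊ - 1 : ℕ) : ℝ) ≤ (k : ℝ) := by exact_mod_cast Nat.cast_le.mpr (le_max_left _ _)
    have h2 : ((⌈t⌉₊ - 1 : ℕ) : ℝ) = (⌈t⌉₊ : ℝ) - 1 := by
      rw [Nat.cast_sub hc1]; simp
    have h3 : t ≤ (⌈t⌉₊ : ℝ) := Nat.le_ceil t
    have h4 : (1:ℝ) ≤ (k:ℝ) := by exact_mod_cast Nat.one_le_cast.mpr (le_max_right _ _)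
    linarith
  calc ∑ p ∈ F, ((p:ℝ)^2)⁻¹ ≤ ∑ i ∈ Ioc k N, ((i:ℝ)^2)⁻¹ :=
        sum_le_sum_of_subset_of_nonneg hFsub (by intro i _ _; positivity)
    _ ≤ (k:ℝ)⁻¹ - (N:ℝ)⁻¹ := sum_Ioc_inv_sq_le_sub hk0 (le_max_right _ _)
    _ ≤ (k:ℝ)⁻¹ := sub_le_self _ (by positivity)
    _ ≤ 2 / t := by
        have hkpos : (0:ℝ) < k := by exact_mod_cast Nat.pos_of_ne_zero hk0
        rw [inv_eq_one_div, div_le_div_iff₀ hkpos (by linarith : (0:ℝ) < t)]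
        linarith

theorem divisor_anatomy :
    ∃ K : ℝ, 0 < K ∧ ∀ (M : ℕ), 0 < M → ∀ (t c : ℝ), 1 ≤ t →
      (∑ n ∈ M.divisors.filter (fun n =>
          c ≤ ∑ p ∈ (M / n).primeFactors.filter (fun p : ℕ => t ≤ (p : ℝ)), (1 / (p : ℝ))),
        (Nat.totient n : ℝ)) ≤ K * M * Real.exp (-100 * c * t) := by
  refine ⟨Real.exp (200 * Real.exp 100), Real.exp_pos _, ?_⟩
  intro M hM t c ht
  have hM0 : M ≠ 0 := hM.ne'
  have ht0 : (0:ℝ) < t := by linarith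
  set L : ℝ := 100 * t with hLdef
  have hL0 : (0:ℝ) ≤ L := by positivity
  set S : ℕ → ℝ := fun n => ∑ p ∈ ((M / n).primeFactors.filter (fun p : ℕ => t ≤ (p:ℝ))), (1/(p:ℝ)) with hSdef
  set F : Finset ℕ := M.primeFactors.filter (fun p : ℕ => t ≤ (p:ℝ)) with hFdef
  have hFfacts : ∀ p ∈ F, Nat.Prime p ∧ t ≤ (p:ℝ) ∧ p ∣ M := by
    intro p hp
    rw [hFdef, mem_filter, Nat.mem_primeFactors] at hp
    exact ⟨hp.1.1, hp.2, hp.1.2.1⟩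
  -- products over subsets of F divide M
  have hdA : ∀ A ∈ F.powerset, (∏ p ∈ A, p) ∣ M := by
    intro A hA
    rw [mem_powerset] at hA
    exact Finset.prod_primes_dvd M (fun p hp => (hFfacts p (hA hp)).1.prime)
      (fun p hp => (hFfacts p (hA hp)).2.2)
  -- step: exp expansion
  have hexp : ∀ n ∈ M.divisors, Real.exp (L * S n) =
      ∑ A ∈ F.powerset, (if (∏ p ∈ A, p) ∣ M / n then ∏ p ∈ A, (Real.exp (L / p) - 1) else 0) := by
    intro n hn
    have hnd : n ∣ M := (Nat.mem_divisors.mp hn).1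
    have hMn : M / n ∣ M := Nat.div_dvd_of_dvd hnd
    have hMn0 : M / n ≠ 0 := by
      have := Nat.div_pos (Nat.le_of_dvd hM hnd) (Nat.pos_of_dvd_of_pos hnd hM)
      omega
    set Fn : Finset ℕ := (M / n).primeFactors.filter (fun p : ℕ => t ≤ (p:ℝ)) with hFn
    have hFnF : Fn ⊆ F := filter_subset_filter _ (Nat.primeFactors_mono hMn hM0)
    have h1 : L * S n = ∑ p ∈ Fn, L / p := by
      rw [hSdef, mul_sum]
      exact sum_congr rfl (fun p _ => by rw [mul_one_div])
    rw [h1, Real.exp_sum]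
    have h2 : ∏ p ∈ Fn, Real.exp (L / p) = ∑ A ∈ Fn.powerset, ∏ p ∈ A, (Real.exp (L / p) - 1) := by
      have := Finset.prod_add (fun p : ℕ => Real.exp (L / p) - 1) (fun _ => (1:ℝ)) Fn
      simp only [prod_const_one, mul_one] at this
      rw [← this]
      exact prod_congr rfl (fun p _ => by ring)
    rw [h2]
    have h3 : Fn.powerset = F.powerset.filter (fun A => A ⊆ Fn) := by
      ext A
      simp only [mem_powerset, mem_filter]
      exact ⟨fun h => ⟨h.trans hFnF, h⟩, fun h => h.2⟩
    rw [h3, sum_filter]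
    refine sum_congr rfl (fun A hA => ?_)
    rw [mem_powerset] at hA
    congr 1
    simp only [eq_iff_iff]
    constructor
    · intro hsub
      exact Finset.prod_primes_dvd (M / n) (fun p hp => (hFfacts p (hA hp)).1.prime)
        (fun p hp => (Nat.mem_primeFactors.mp (mem_filter.mp (hsub hp)).1).2.1)
    · intro hdvd p hp
      have hprime := (hFfacts p (hA hp)).1
      rw [hFn, mem_filter, Nat.mem_primeFactors]
      exact ⟨⟨hprime, dvd_trans (dvd_prod_of_mem _ hp) hdvd, hMn0⟩, (hFfacts p (hA hp)).2.1⟩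
  -- main identity
  have key : ∑ n ∈ M.divisors, (Nat.totient n : ℝ) * Real.exp (L * S n)
      = ∑ A ∈ F.powerset, (∏ p ∈ A, (Real.exp (L / p) - 1)) * ((M / ∏ p ∈ A, p : ℕ) : ℝ) := by
    rw [sum_congr rfl (fun n hn => by rw [hexp n hn, mul_sum])]
    rw [sum_comm]
    refine sum_congr rfl (fun A hA => ?_)
    have hd : (∏ p ∈ A, p) ∣ M := hdA A hA
    calc ∑ n ∈ M.divisors, (Nat.totient n : ℝ) *
            (if (∏ p ∈ A, p) ∣ M / n then ∏ p ∈ A, (Real.exp (L / p) - 1) else 0)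
        = ∑ n ∈ M.divisors.filter (fun n => (∏ p ∈ A, p) ∣ M / n),
            (Nat.totient n : ℝ) * ∏ p ∈ A, (Real.exp (L / p) - 1) := by
          rw [sum_filter]
          exact sum_congr rfl (fun n _ => by rw [mul_ite, mul_zero])
      _ = (∏ p ∈ A, (Real.exp (L / p) - 1)) * ((M / ∏ p ∈ A, p : ℕ) : ℝ) := by
          rw [aux_filter M _ hM0 hd, ← sum_mul, mul_comm]
          congr 1
          rw [← Nat.cast_sum]
          norm_cast
          exact Nat.sum_totient _
  -- cast of M / prod
  have hterm : ∀ A ∈ F.powerset, (∏ p ∈ A, (Real.exp (L / p) - 1)) * ((M / ∏ p ∈ A, p : ℕ) : ℝ)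
      = (M : ℝ) * ∏ p ∈ A, ((Real.exp (L / p) - 1) / (p : ℝ)) := by
    intro A hA
    have hd := hdA A hA
    rw [mem_powerset] at hA
    have hp0 : ((∏ p ∈ A, p : ℕ) : ℝ) ≠ 0 := by
      rw [Nat.cast_ne_zero]
      exact Finset.prod_ne_zero_iff.mpr (fun p hp => (hFfacts p (hA hp)).1.ne_zero)
    rw [Nat.cast_div hd hp0, prod_div_distrib, ← Nat.cast_prod]
    field_simp
  have hprod : ∑ A ∈ F.powerset, ∏ p ∈ A, ((Real.exp (L / p) - 1) / (p : ℝ))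
      = ∏ p ∈ F, (1 + (Real.exp (L / p) - 1) / (p : ℝ)) := by
    have h := Finset.prod_add (fun p : ℕ => (Real.exp (L / p) - 1) / (p : ℝ)) (fun _ => (1 : ℝ)) F
    simp only [prod_const_one, mul_one] at h
    rw [← h]
    exact (prod_congr rfl (fun p _ => by ring))
  have hynn : ∀ p ∈ F, (0:ℝ) ≤ (Real.exp (L / p) - 1) / (p : ℝ) := by
    intro p hp
    have hp0 : (0:ℝ) < p := lt_of_lt_of_le ht0 (hFfacts p hp).2.1
    exact div_nonneg (sub_nonneg.mpr (Real.one_le_exp (by positivity))) hp0.le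
  have hy : ∀ p ∈ F, (Real.exp (L / p) - 1) / (p : ℝ) ≤ (100 * t * Real.exp 100) * ((p:ℝ)^2)⁻¹ := by
    intro p hp
    obtain ⟨hprime, htp, -⟩ := hFfacts p hp
    have hp0 : (0:ℝ) < p := lt_of_lt_of_le ht0 htp
    have hx0 : (0:ℝ) ≤ L / p := by positivity
    have hx100 : L / p ≤ 100 := by
      rw [div_le_iff₀ hp0]
      nlinarith
    have h1 : Real.exp (L / p) - 1 ≤ (L / p) * Real.exp (L / p) := by
      have h := Real.add_one_le_exp (-(L / p))
      rw [Real.exp_neg] at h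
      have hepos := Real.exp_pos (L / p)
      have h2 : (1 - L / p) * Real.exp (L / p) ≤ 1 := by
        rw [← le_div_iff₀ hepos, one_div]
        linarith
      nlinarith
    have h2 : Real.exp (L / p) ≤ Real.exp 100 := Real.exp_le_exp.mpr hx100
    calc (Real.exp (L / p) - 1) / (p : ℝ) ≤ ((L / p) * Real.exp 100) / (p : ℝ) := by
          gcongr
          exact h1.trans (mul_le_mul_of_nonneg_left h2 hx0)
      _ = (100 * t * Real.exp 100) * ((p:ℝ)^2)⁻¹ := by
          rw [hLdef]; field_simp
  have hysum : ∑ p ∈ F, (Real.exp (L / p) - 1) / (p : ℝ) ≤ 200 * Real.exp 100 := by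
    calc ∑ p ∈ F, (Real.exp (L / p) - 1) / (p : ℝ)
        ≤ ∑ p ∈ F, (100 * t * Real.exp 100) * ((p:ℝ)^2)⁻¹ := sum_le_sum hy
      _ = (100 * t * Real.exp 100) * ∑ p ∈ F, ((p:ℝ)^2)⁻¹ := by rw [mul_sum]
      _ ≤ (100 * t * Real.exp 100) * (2 / t) := by
          refine mul_le_mul_of_nonneg_left (aux_invsq M hM t ht F hFfacts) (by positivity)
      _ = 200 * Real.exp 100 := by field_simp; ring
  have hprodle : ∏ p ∈ F, (1 + (Real.exp (L / p) - 1) / (p : ℝ)) ≤ Real.exp (200 * Real.exp 100) := by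
    calc ∏ p ∈ F, (1 + (Real.exp (L / p) - 1) / (p : ℝ))
        ≤ ∏ p ∈ F, Real.exp ((Real.exp (L / p) - 1) / (p : ℝ)) := by
          refine prod_le_prod (fun p hp => by linarith [hynn p hp]) (fun p hp => ?_)
          have := Real.add_one_le_exp ((Real.exp (L / p) - 1) / (p : ℝ))
          linarith
      _ = Real.exp (∑ p ∈ F, (Real.exp (L / p) - 1) / (p : ℝ)) := (Real.exp_sum _ _).symm
      _ ≤ Real.exp (200 * Real.exp 100) := Real.exp_le_exp.mpr hysum
  calc (∑ n ∈ M.divisors.filter (fun n =>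
          c ≤ ∑ p ∈ (M / n).primeFactors.filter (fun p : ℕ => t ≤ (p : ℝ)), (1 / (p : ℝ))),
        (Nat.totient n : ℝ))
      ≤ ∑ n ∈ M.divisors, (Nat.totient n : ℝ) * Real.exp (L * (S n - c)) := by
        refine le_trans (sum_le_sum fun n hn => ?_)
          (sum_le_sum_of_subset_of_nonneg (filter_subset _ _) (fun n _ _ => by positivity))
        have hc : c ≤ S n := (mem_filter.mp hn).2
        nth_rewrite 1 [← mul_one ((Nat.totient n : ℝ))]
        exact mul_le_mul_of_nonneg_left (Real.one_le_exp (mul_nonneg hL0 (by linarith))) (Nat.cast_nonneg _)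
    _ = Real.exp (-(L * c)) * ∑ n ∈ M.divisors, (Nat.totient n : ℝ) * Real.exp (L * S n) := by
        rw [mul_sum]
        refine sum_congr rfl fun n _ => ?_
        rw [show L * (S n - c) = -(L * c) + L * S n by ring, Real.exp_add]
        ring
    _ = Real.exp (-(L * c)) * ∑ A ∈ F.powerset,
          (∏ p ∈ A, (Real.exp (L / p) - 1)) * ((M / ∏ p ∈ A, p : ℕ) : ℝ) := by rw [key]
    _ = Real.exp (-(L * c)) * ((M:ℝ) * ∏ p ∈ F, (1 + (Real.exp (L / p) - 1) / (p : ℝ))) := by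
        rw [sum_congr rfl hterm, ← mul_sum, hprod]
    _ ≤ Real.exp (-(L * c)) * ((M:ℝ) * Real.exp (200 * Real.exp 100)) := by
        refine mul_le_mul_of_nonneg_left
          (mul_le_mul_of_nonneg_left hprodle (Nat.cast_nonneg M)) (Real.exp_pos _).le
    _ = Real.exp (200 * Real.exp 100) * M * Real.exp (-100 * c * t) := by
        rw [show -(L * c) = -100 * c * t by rw [hLdef]; ring]
        ring
end

section
/- Let q, r be distinct squarefree positive integers, let N be any positive integer, and set v⁻ = N/gcd(N,q), v⁺ = q/gcd(N,q), w⁻ = N/gcd(N,r), w⁺ = r/gcd(N,r). Suppose that for every prime p, |ν_p(q/N)| + |ν_p(r/N)| ≤ 1, where ν_p denotes the p-adic valuation on rationals. Then v⁻, v⁺, w⁻, w⁺ are pairwise coprime, q = N·v⁺/v⁻, r = N·w⁺/w⁻, and qr/gcd(q,r)² = v⁻·v⁺·w⁻·w⁺. -/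
private lemma val_div_gcd_left {m k p : ℕ} (hm : m ≠ 0) (hk : k ≠ 0) (hp : p.Prime) :
    padicValNat p (m / Nat.gcd m k)
      = padicValNat p m - min (padicValNat p m) (padicValNat p k) := by
  simp only [← Nat.factorization_def _ hp]
  rw [Nat.factorization_div (Nat.gcd_dvd_left m k)]
  simp [Nat.factorization_gcd hm hk, Finsupp.tsub_apply, Finsupp.inf_apply]

private lemma val_div_gcd_right {m k p : ℕ} (hm : m ≠ 0) (hk : k ≠ 0) (hp : p.Prime) :
    padicValNat p (k / Nat.gcd m k)
      = padicValNat p k - min (padicValNat p m) (padicValNat p k) := by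
  simp only [← Nat.factorization_def _ hp]
  rw [Nat.factorization_div (Nat.gcd_dvd_right m k)]
  simp [Nat.factorization_gcd hm hk, Finsupp.tsub_apply, Finsupp.inf_apply]

private lemma coprime_of_no_common_prime {a b : ℕ}
    (h : ∀ p, p.Prime → p ∣ a → p ∣ b → False) : Nat.Coprime a b := by
  rw [Nat.Coprime]
  by_contra hg
  obtain ⟨p, hp, hpd⟩ := Nat.exists_prime_and_dvd hg
  exact h p hp (hpd.trans (Nat.gcd_dvd_left a b)) (hpd.trans (Nat.gcd_dvd_right a b))

private lemma one_le_val_of_dvd {p n : ℕ} (hp : p.Prime) (hn : n ≠ 0) (h : p ∣ n) :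
    1 ≤ padicValNat p n := by
  rw [← Nat.factorization_def _ hp]
  exact (Nat.Prime.dvd_iff_one_le_factorization hp hn).1 h

theorem padic_structure_lemma (q r N : ℕ) (hq : 0 < q) (hr : 0 < r) (hN : 0 < N)
    (hsq : Squarefree q) (hsr : Squarefree r) (hqr : q ≠ r)
    (hval : ∀ p : ℕ, p.Prime →
      |padicValRat p ((q : ℚ) / N)| + |padicValRat p ((r : ℚ) / N)| ≤ 1) :
    (Nat.Coprime (N / Nat.gcd N q) (q / Nat.gcd N q) ∧
     Nat.Coprime (N / Nat.gcd N q) (N / Nat.gcd N r) ∧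
     Nat.Coprime (N / Nat.gcd N q) (r / Nat.gcd N r) ∧
     Nat.Coprime (q / Nat.gcd N q) (N / Nat.gcd N r) ∧
     Nat.Coprime (q / Nat.gcd N q) (r / Nat.gcd N r) ∧
     Nat.Coprime (N / Nat.gcd N r) (r / Nat.gcd N r)) ∧
    q * (N / Nat.gcd N q) = N * (q / Nat.gcd N q) ∧
    r * (N / Nat.gcd N r) = N * (r / Nat.gcd N r) ∧
    q * r = (N / Nat.gcd N q) * (q / Nat.gcd N q) * (N / Nat.gcd N r) * (r / Nat.gcd N r)
      * (Nat.gcd q r) ^ 2 := by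
  have hN' : N ≠ 0 := hN.ne'
  have hq' : q ≠ 0 := hq.ne'
  have hr' : r ≠ 0 := hr.ne'
  -- translate hval into four linear integer inequalities per prime
  have key : ∀ p : ℕ, p.Prime →
      ((padicValNat p q : ℤ) - padicValNat p N) + ((padicValNat p r : ℤ) - padicValNat p N) ≤ 1 ∧
      ((padicValNat p q : ℤ) - padicValNat p N) - ((padicValNat p r : ℤ) - padicValNat p N) ≤ 1 ∧
      -(((padicValNat p q : ℤ) - padicValNat p N)) + ((padicValNat p r : ℤ) - padicValNat p N) ≤ 1 ∧
      -(((padicValNat p q : ℤ) - padicValNat p N)) - ((padicValNat p r : ℤ) - padicValNat p N) ≤ 1 := by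
    intro p hp
    haveI : Fact p.Prime := ⟨hp⟩
    have h := hval p hp
    have hq0 : (q : ℚ) ≠ 0 := Nat.cast_ne_zero.2 hq'
    have hr0 : (r : ℚ) ≠ 0 := Nat.cast_ne_zero.2 hr'
    have hN0 : (N : ℚ) ≠ 0 := Nat.cast_ne_zero.2 hN'
    rw [padicValRat.div hq0 hN0, padicValRat.div hr0 hN0] at h
    simp only [padicValRat.of_nat] at h
    set x : ℤ := (padicValNat p q : ℤ) - padicValNat p N
    set y : ℤ := (padicValNat p r : ℤ) - padicValNat p N
    have h1 : x + y ≤ 1 := le_trans (add_le_add (le_abs_self x) (le_abs_self y)) h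
    have h2 : x - y ≤ 1 := le_trans (by have := le_abs_self x; have := neg_abs_le y; linarith) h
    have h3 : -x + y ≤ 1 := le_trans (by have := neg_abs_le x; have := le_abs_self y; linarith) h
    have h4 : -x - y ≤ 1 := le_trans (by have := neg_abs_le x; have := neg_abs_le y; linarith) h
    exact ⟨h1, h2, h3, h4⟩
  have haq : ∀ p : ℕ, p.Prime → padicValNat p q ≤ 1 := fun p hp => by
    rw [← Nat.factorization_def _ hp]; exact hsq.natFactorization_le_one p
  have har : ∀ p : ℕ, p.Prime → padicValNat p r ≤ 1 := fun p hp => by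
    rw [← Nat.factorization_def _ hp]; exact hsr.natFactorization_le_one p
  have hgq : 0 < Nat.gcd N q := Nat.gcd_pos_of_pos_left q hN
  have hgr : 0 < Nat.gcd N r := Nat.gcd_pos_of_pos_left r hN
  have hv1 : N / Nat.gcd N q ≠ 0 :=
    (Nat.div_pos (Nat.le_of_dvd hN (Nat.gcd_dvd_left N q)) hgq).ne'
  have hv2 : q / Nat.gcd N q ≠ 0 :=
    (Nat.div_pos (Nat.le_of_dvd hq (Nat.gcd_dvd_right N q)) hgq).ne'
  have hw1 : N / Nat.gcd N r ≠ 0 :=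
    (Nat.div_pos (Nat.le_of_dvd hN (Nat.gcd_dvd_left N r)) hgr).ne'
  have hw2 : r / Nat.gcd N r ≠ 0 :=
    (Nat.div_pos (Nat.le_of_dvd hr (Nat.gcd_dvd_right N r)) hgr).ne'
  refine ⟨⟨?_, ?_, ?_, ?_, ?_, ?_⟩, ?_, ?_, ?_⟩
  · exact Nat.coprime_div_gcd_div_gcd hgq
  · refine coprime_of_no_common_prime fun p hp h1 h2 => ?_
    have e1 := one_le_val_of_dvd hp hv1 h1
    have e2 := one_le_val_of_dvd hp hw1 h2
    rw [val_div_gcd_left hN' hq' hp] at e1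
    rw [val_div_gcd_left hN' hr' hp] at e2
    obtain ⟨k1, k2, k3, k4⟩ := key p hp
    omega
  · refine coprime_of_no_common_prime fun p hp h1 h2 => ?_
    have e1 := one_le_val_of_dvd hp hv1 h1
    have e2 := one_le_val_of_dvd hp hw2 h2
    rw [val_div_gcd_left hN' hq' hp] at e1
    rw [val_div_gcd_right hN' hr' hp] at e2
    have := har p hp
    omega
  · refine coprime_of_no_common_prime fun p hp h1 h2 => ?_
    have e1 := one_le_val_of_dvd hp hv2 h1
    have e2 := one_le_val_of_dvd hp hw1 h2
    rw [val_div_gcd_right hN' hq' hp] at e1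
    rw [val_div_gcd_left hN' hr' hp] at e2
    have := haq p hp
    omega
  · refine coprime_of_no_common_prime fun p hp h1 h2 => ?_
    have e1 := one_le_val_of_dvd hp hv2 h1
    have e2 := one_le_val_of_dvd hp hw2 h2
    rw [val_div_gcd_right hN' hq' hp] at e1
    rw [val_div_gcd_right hN' hr' hp] at e2
    obtain ⟨k1, k2, k3, k4⟩ := key p hp
    omega
  · exact Nat.coprime_div_gcd_div_gcd hgr
  · rw [← Nat.mul_div_assoc q (Nat.gcd_dvd_left N q),
      ← Nat.mul_div_assoc N (Nat.gcd_dvd_right N q), mul_comm q N]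
  · rw [← Nat.mul_div_assoc r (Nat.gcd_dvd_left N r),
      ← Nat.mul_div_assoc N (Nat.gcd_dvd_right N r), mul_comm r N]
  · have hgqr : Nat.gcd q r ≠ 0 := (Nat.gcd_pos_of_pos_left r hq).ne'
    rw [Nat.eq_iff_prime_padicValNat_eq _ _ (mul_ne_zero hq' hr')
      (by positivity)]
    intro p hp
    haveI : Fact p.Prime := ⟨hp⟩
    rw [padicValNat.mul hq' hr',
      padicValNat.mul (by positivity) (pow_ne_zero 2 hgqr),
      padicValNat.mul (by positivity) hw2,
      padicValNat.mul (by positivity) hw1,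
      padicValNat.mul hv1 hv2,
      padicValNat.pow (Nat.gcd q r) 2,
      val_div_gcd_left hN' hq' hp, val_div_gcd_right hN' hq' hp,
      val_div_gcd_left hN' hr' hp, val_div_gcd_right hN' hr' hp]
    have hg : padicValNat p (Nat.gcd q r) = min (padicValNat p q) (padicValNat p r) := by
      simp only [← Nat.factorization_def _ hp]
      rw [Nat.factorization_gcd hq' hr', Finsupp.inf_apply]
    obtain ⟨k1, k2, k3, k4⟩ := key p hp
    have := haq p hp
    have := har p hp
    omega
end

section
/- Let μ be a Borel probability measure on a metric space, and suppose (E_i) are measurable sets such that there exist constants c, C > 0 and finite sets S_k ⊆ ℕ with min S_k → ∞, ∑_{i ∈ S_k} μ(E_i) ≥ c, and ∑_{s<t, s,t ∈ S_k} μ(E_s ∩ E_t) ≤ C·(∑_{i ∈ S_k} μ(E_i))². Then μ(limsup_i E_i) ≥ c'/C' for some constants c', C' > 0 depending only on c, C (in particular the limsup set has positive measure). -/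
open MeasureTheory

lemma chung_erdos {X : Type} [MeasurableSpace X] (μ : Measure X) (E : ℕ → Set X)
    (hE : ∀ i, MeasurableSet (E i)) (S : Finset ℕ) :
    (∑ i ∈ S, μ (E i)) ^ 2 ≤ μ (⋃ i ∈ S, E i) * ∑ s ∈ S, ∑ t ∈ S, μ (E s ∩ E t) := by
  set U : Set X := ⋃ i ∈ S, E i with hU
  have hUm : MeasurableSet U := MeasurableSet.biUnion S.countable_toSet (fun i _ => hE i)
  set f : X → ENNReal := fun x => ∑ i ∈ S, (E i).indicator 1 x with hf
  set g : X → ENNReal := U.indicator 1 with hg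
  have hfm : Measurable f := by
    apply Finset.measurable_sum
    exact fun i _ => (measurable_const.indicator (hE i))
  have hgm : Measurable g := measurable_const.indicator hUm
  have hgf : ∀ x, (g * f) x = f x := by
    intro x
    by_cases hx : x ∈ U
    · simp [hg, Set.indicator_of_mem hx]
    · have : f x = 0 := by
        apply Finset.sum_eq_zero
        intro i hi
        apply Set.indicator_of_notMem
        exact fun h => hx (Set.mem_biUnion hi h)
      simp [this]
  have hpq : Real.HolderConjugate 2 2 := Real.HolderConjugate.two_two
  have holder := ENNReal.lintegral_mul_le_Lp_mul_Lq μ hpq hgm.aemeasurable hfm.aemeasurable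
  have hT : ∫⁻ x, f x ∂μ = ∑ i ∈ S, μ (E i) := by
    have h1 : ∫⁻ x, ∑ i ∈ S, (E i).indicator 1 x ∂μ
        = ∑ i ∈ S, ∫⁻ x, (E i).indicator 1 x ∂μ :=
      lintegral_finset_sum _ (fun i _ => measurable_const.indicator (hE i))
    show ∫⁻ x, ∑ i ∈ S, (E i).indicator 1 x ∂μ = _
    rw [h1]
    exact Finset.sum_congr rfl fun i _ => lintegral_indicator_one (hE i)
  have hG : ∫⁻ x, g x ^ (2:ℝ) ∂μ = μ U := by
    have : ∀ x, g x ^ (2:ℝ) = g x := by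
      intro x
      by_cases hx : x ∈ U
      · simp [hg, Set.indicator_of_mem hx]
      · simp [hg, Set.indicator_of_notMem hx, ENNReal.zero_rpow_of_pos (by norm_num : (0:ℝ) < 2)]
    simp_rw [this]
    exact lintegral_indicator_one hUm
  have hF : ∫⁻ x, f x ^ (2:ℝ) ∂μ = ∑ s ∈ S, ∑ t ∈ S, μ (E s ∩ E t) := by
    have h2 : ∀ x, f x ^ (2:ℝ) = ∑ s ∈ S, ∑ t ∈ S, (E s ∩ E t).indicator 1 x := by
      intro x
      have : f x ^ (2:ℝ) = f x * f x := by
        rw [show (2:ℝ) = ((2:ℕ):ℝ) by norm_num, ENNReal.rpow_natCast, sq]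
      rw [this, hf, Finset.sum_mul_sum]
      refine Finset.sum_congr rfl fun s _ => Finset.sum_congr rfl fun t _ => ?_
      rw [← Set.inter_indicator_mul]
      norm_num
      rfl
    simp_rw [h2]
    have h3 : ∫⁻ x, ∑ s ∈ S, ∑ t ∈ S, (E s ∩ E t).indicator 1 x ∂μ
        = ∑ s ∈ S, ∫⁻ x, ∑ t ∈ S, (E s ∩ E t).indicator 1 x ∂μ :=
      lintegral_finset_sum _ (fun s _ => Finset.measurable_sum _
        (fun t _ => measurable_const.indicator ((hE s).inter (hE t))))
    rw [h3]
    refine Finset.sum_congr rfl fun s _ => ?_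
    have h4 : ∫⁻ x, ∑ t ∈ S, (E s ∩ E t).indicator 1 x ∂μ
        = ∑ t ∈ S, ∫⁻ x, (E s ∩ E t).indicator 1 x ∂μ :=
      lintegral_finset_sum _ (fun t _ => measurable_const.indicator ((hE s).inter (hE t)))
    rw [h4]
    exact Finset.sum_congr rfl fun t _ => lintegral_indicator_one ((hE s).inter (hE t))
  have key : ∑ i ∈ S, μ (E i) ≤ (μ U) ^ (1/2:ℝ) * (∑ s ∈ S, ∑ t ∈ S, μ (E s ∩ E t)) ^ (1/2:ℝ) := by
    calc ∑ i ∈ S, μ (E i) = ∫⁻ x, (g * f) x ∂μ := by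
          rw [← hT]; exact (lintegral_congr hgf).symm
      _ ≤ (∫⁻ x, g x ^ (2:ℝ) ∂μ) ^ (1/2:ℝ) * (∫⁻ x, f x ^ (2:ℝ) ∂μ) ^ (1/2:ℝ) := holder
      _ = (μ U) ^ (1/2:ℝ) * (∑ s ∈ S, ∑ t ∈ S, μ (E s ∩ E t)) ^ (1/2:ℝ) := by rw [hG, hF]
  calc (∑ i ∈ S, μ (E i)) ^ 2
      ≤ ((μ U) ^ (1/2:ℝ) * (∑ s ∈ S, ∑ t ∈ S, μ (E s ∩ E t)) ^ (1/2:ℝ)) ^ 2 := by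
        gcongr
    _ = μ U * ∑ s ∈ S, ∑ t ∈ S, μ (E s ∩ E t) := by
        rw [mul_pow, ← ENNReal.rpow_natCast ((μ U) ^ (1/2:ℝ)) 2,
          ← ENNReal.rpow_natCast ((∑ s ∈ S, ∑ t ∈ S, μ (E s ∩ E t)) ^ (1/2:ℝ)) 2,
          ← ENNReal.rpow_mul, ← ENNReal.rpow_mul]
        norm_num

lemma sum_pair_decomp (S : Finset ℕ) (g : ℕ → ℕ → ENNReal) (hsymm : ∀ s t, g s t = g t s) :
    ∑ s ∈ S, ∑ t ∈ S, g s t =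
      (∑ s ∈ S, g s s) + 2 * ∑ s ∈ S, ∑ t ∈ S.filter (fun t => s < t), g s t := by
  have hswap : ∑ s ∈ S, ∑ t ∈ S.filter (fun t => t < s), g s t
      = ∑ s ∈ S, ∑ t ∈ S.filter (fun t => s < t), g s t := by
    calc ∑ s ∈ S, ∑ t ∈ S.filter (fun t => t < s), g s t
        = ∑ s ∈ S, ∑ t ∈ S, if t < s then g t s else 0 := by
          refine Finset.sum_congr rfl fun s _ => ?_
          rw [← Finset.sum_filter]
          exact Finset.sum_congr rfl fun t _ => hsymm s t
      _ = ∑ t ∈ S, ∑ s ∈ S, if t < s then g t s else 0 := Finset.sum_comm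
      _ = ∑ t ∈ S, ∑ s ∈ S.filter (fun s => t < s), g t s := by
          refine Finset.sum_congr rfl fun t _ => (Finset.sum_filter _ _).symm
  have hsplit : ∀ s ∈ S, ∑ t ∈ S, g s t =
      (∑ t ∈ S.filter (fun t => s < t), g s t) + (∑ t ∈ S.filter (fun t => t < s), g s t)
        + g s s := by
    intro s hs
    rw [← Finset.sum_filter_add_sum_filter_not S (fun t => s < t) (fun t => g s t)]
    rw [add_assoc]
    congr 1
    rw [← Finset.sum_filter_add_sum_filter_not (S.filter (fun t => ¬ s < t)) (fun t => t < s)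
      (fun t => g s t), Finset.filter_filter, Finset.filter_filter]
    congr 1
    · apply Finset.sum_congr _ (fun t _ => rfl)
      apply Finset.filter_congr
      intro t _
      omega
    · have : S.filter (fun t => ¬ s < t ∧ ¬ t < s) = {s} := by
        ext t
        simp only [Finset.mem_filter, Finset.mem_singleton]
        constructor
        · rintro ⟨_, h1, h2⟩; omega
        · rintro rfl; exact ⟨hs, by omega, by omega⟩
      rw [this, Finset.sum_singleton]
  calc ∑ s ∈ S, ∑ t ∈ S, g s t
      = ∑ s ∈ S, ((∑ t ∈ S.filter (fun t => s < t), g s t)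
          + (∑ t ∈ S.filter (fun t => t < s), g s t) + g s s) :=
        Finset.sum_congr rfl hsplit
    _ = (∑ s ∈ S, ∑ t ∈ S.filter (fun t => s < t), g s t)
        + (∑ s ∈ S, ∑ t ∈ S.filter (fun t => t < s), g s t) + ∑ s ∈ S, g s s := by
        rw [Finset.sum_add_distrib, Finset.sum_add_distrib]
    _ = (∑ s ∈ S, g s s) + 2 * ∑ s ∈ S, ∑ t ∈ S.filter (fun t => s < t), g s t := by
        rw [hswap]; ring

theorem quasi_independence_positive_measure (c C : ℝ) (hc : 0 < c) (hC : 0 < C) :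
    ∃ c' C' : ℝ, 0 < c' ∧ 0 < C' ∧
      ∀ (X : Type) [MetricSpace X] [MeasurableSpace X] [BorelSpace X]
        (μ : Measure X) [IsProbabilityMeasure μ] (E : ℕ → Set X)
        (S : ℕ → Finset ℕ),
        (∀ i, MeasurableSet (E i)) →
        (∀ m : ℕ, ∃ k₀ : ℕ, ∀ k ≥ k₀, ∀ i ∈ S k, m ≤ i) →
        (∀ k, ENNReal.ofReal c ≤ ∑ i ∈ S k, μ (E i)) →
        (∀ k, ∑ s ∈ S k, ∑ t ∈ (S k).filter (fun t => s < t), μ (E s ∩ E t) ≤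
            ENNReal.ofReal C * (∑ i ∈ S k, μ (E i)) ^ 2) →
        μ {x | {i : ℕ | x ∈ E i}.Infinite} ≥ ENNReal.ofReal (c' / C') := by
  refine ⟨c, 1 + 2 * c * C, hc, by positivity, ?_⟩
  intro X _ _ _ μ _ E S hE hmin hlow hup
  set r : ENNReal := ENNReal.ofReal (c / (1 + 2 * c * C)) with hr
  -- Step A: each union has measure at least r
  have stepA : ∀ k, r ≤ μ (⋃ i ∈ S k, E i) := by
    intro k
    set T : ENNReal := ∑ i ∈ S k, μ (E i) with hT
    set D : ENNReal := ∑ s ∈ S k, ∑ t ∈ S k, μ (E s ∩ E t) with hD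
    set P : ENNReal := ∑ s ∈ S k, ∑ t ∈ (S k).filter (fun t => s < t), μ (E s ∩ E t) with hP
    have hT_top : T ≠ ⊤ := by
      exact (ENNReal.sum_lt_top.2 fun i _ => measure_lt_top μ _).ne
    have hT_pos : T ≠ 0 := by
      intro h
      have := hlow k
      rw [← hT, h, le_zero_iff] at this
      exact (ENNReal.ofReal_pos.2 hc).ne' this
    have hDdec : D = T + 2 * P := by
      rw [hD, sum_pair_decomp (S k) (fun s t => μ (E s ∩ E t))
        (fun s t => by show μ (E s ∩ E t) = μ (E t ∩ E s); rw [Set.inter_comm]), ← hP]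
      congr 1
      rw [hT]
      exact Finset.sum_congr rfl fun s _ => by rw [Set.inter_self]
    have hden : D ≤ T + ENNReal.ofReal (2 * C) * T ^ 2 := by
      rw [hDdec]
      refine add_le_add (le_refl T) ?_
      calc 2 * P ≤ 2 * (ENNReal.ofReal C * T ^ 2) := by gcongr; exact hup k
        _ = ENNReal.ofReal (2 * C) * T ^ 2 := by
            rw [ENNReal.ofReal_mul (by norm_num : (0:ℝ) ≤ 2), ENNReal.ofReal_ofNat,
              mul_assoc]
    have hce : T ^ 2 ≤ μ (⋃ i ∈ S k, E i) * D := chung_erdos μ E hE (S k)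
    set den : ENNReal := T + ENNReal.ofReal (2 * C) * T ^ 2 with hden'
    have hden_ne_top : den ≠ ⊤ := by
      rw [hden']
      refine ENNReal.add_ne_top.2 ⟨hT_top, ?_⟩
      exact ENNReal.mul_ne_top ENNReal.ofReal_ne_top (ENNReal.pow_ne_top hT_top)
    have hden_ne_zero : den ≠ 0 := by
      rw [hden']
      simp [hT_pos]
    have hmain : T ^ 2 ≤ μ (⋃ i ∈ S k, E i) * den :=
      le_trans hce (mul_le_mul_right hden _)
    -- r * den ≤ T^2
    have h1 : ENNReal.ofReal c * T ≤ T ^ 2 := by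
      rw [sq]; exact mul_le_mul_left (hlow k) T
    have h2 : T ≤ ENNReal.ofReal c⁻¹ * T ^ 2 := by
      have h3 := mul_le_mul_right h1 (ENNReal.ofReal c⁻¹)
      rwa [← mul_assoc, ← ENNReal.ofReal_mul (inv_nonneg.2 hc.le),
        inv_mul_cancel₀ hc.ne', ENNReal.ofReal_one, one_mul] at h3
    have hrd : r * den ≤ T ^ 2 := by
      calc r * den ≤ r * (ENNReal.ofReal c⁻¹ * T ^ 2 + ENNReal.ofReal (2 * C) * T ^ 2) := by
            rw [hden']; gcongr
        _ = ENNReal.ofReal ((c / (1 + 2 * c * C)) * (c⁻¹ + 2 * C)) * T ^ 2 := by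
            rw [← add_mul, ← ENNReal.ofReal_add (inv_nonneg.2 hc.le) (by positivity),
              ← mul_assoc, ← ENNReal.ofReal_mul (by positivity)]
        _ = 1 * T ^ 2 := by
            congr 1
            rw [show (c / (1 + 2 * c * C)) * (c⁻¹ + 2 * C) = 1 by
              field_simp]
            exact ENNReal.ofReal_one
        _ = T ^ 2 := one_mul _
    have := le_trans hrd hmain
    exact (ENNReal.mul_le_mul_iff_left hden_ne_zero hden_ne_top).1 this
  -- Step B
  set A : ℕ → Set X := fun m => ⋃ i, ⋃ (_ : m ≤ i), E i with hA
  have hAm : ∀ m, MeasurableSet (A m) := fun m =>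
    MeasurableSet.iUnion fun i => MeasurableSet.iUnion fun _ => hE i
  have hAmono : ∀ {m n : ℕ}, m ≤ n → A n ⊆ A m := by
    intro m n hmn
    apply Set.iUnion_mono
    intro i
    exact Set.iUnion_subset fun h => Set.subset_iUnion_of_subset (le_trans hmn h) (by rfl)
  have stepB : ∀ m, r ≤ μ (A m) := by
    intro m
    obtain ⟨k₀, hk₀⟩ := hmin m
    refine le_trans (stepA k₀) (measure_mono ?_)
    refine Set.iUnion₂_subset fun i hi => ?_
    exact Set.subset_iUnion_of_subset i (Set.subset_iUnion_of_subset (hk₀ k₀ le_rfl i hi)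
      (fun x hx => hx))
  -- Step C
  have hLset : {x : X | {i : ℕ | x ∈ E i}.Infinite} = ⋂ m, A m := by
    ext x
    simp only [Set.mem_setOf_eq, Set.mem_iInter, hA, Set.mem_iUnion]
    rw [← Nat.frequently_atTop_iff_infinite, Filter.frequently_atTop]
    simp [ge_iff_le]
  -- Step D
  rw [hLset, Directed.measure_iInter (fun m => (hAm m).nullMeasurableSet)
    (fun m n => ⟨max m n, hAmono (le_max_left m n), hAmono (le_max_right m n)⟩)
    ⟨0, measure_ne_top μ _⟩]
  exact le_iInf stepB
end

section
/- Let G = (V ⊔ W, ℰ) be a finite bipartite graph with ℰ ⊆ V × W, and let μ, ν be finitely supported nonnegative weight functions on V and W respectively with μ(V), ν(W) > 0. Define the weight of ℰ as w(ℰ) = ∑_{(v,w) ∈ ℰ} μ(v)ν(w). Then there exists a nonempty sub-edge-set ℰ' ⊆ ℰ with restricted vertex sets V' = {v : ∃w, (v,w) ∈ ℰ'}, W' = {w : ∃v, (v,w) ∈ ℰ'} such that w(ℰ')/√(μ(V')·ν(W')) ≥ w(ℰ)/√(μ(V)·ν(W)), and for every v ∈ V' the neighbourhood satisfies ν(Γ_{ℰ'}(v))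 ≥ (1/2)·w(ℰ')/μ(V'), and symmetrically for every w ∈ W', μ(Γ_{ℰ'}(w)) ≥ (1/2)·w(ℰ')/ν(W'). -/
open Finset

section PP
variable {V W : Type*} [Fintype V] [Fintype W] [DecidableEq V] [DecidableEq W]

private def wgt (μ : V → ℝ) (ν : W → ℝ) (E : Finset (V × W)) : ℝ :=
  ∑ e ∈ E, μ e.1 * ν e.2

private def msA (μ : V → ℝ) (E : Finset (V × W)) : ℝ := ∑ v ∈ E.image Prod.fst, μ v
private def msB (ν : W → ℝ) (E : Finset (V × W)) : ℝ := ∑ w ∈ E.image Prod.snd, ν w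

variable {μ : V → ℝ} {ν : W → ℝ}

private lemma msA_nonneg (hμ : ∀ v, 0 ≤ μ v) (E : Finset (V × W)) : 0 ≤ msA μ E :=
  sum_nonneg fun _ _ => hμ _

private lemma msB_nonneg (hν : ∀ w, 0 ≤ ν w) (E : Finset (V × W)) : 0 ≤ msB ν E :=
  sum_nonneg fun _ _ => hν _

private lemma wgt_nonneg (hμ : ∀ v, 0 ≤ μ v) (hν : ∀ w, 0 ≤ ν w) (E : Finset (V × W)) :
    0 ≤ wgt μ ν E :=
  sum_nonneg fun _ _ => mul_nonneg (hμ _) (hν _)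

private lemma msA_pos (hμ : ∀ v, 0 ≤ μ v) {E : Finset (V × W)} (hw : 0 < wgt μ ν E) :
    0 < msA μ E := by
  rcases (msA_nonneg hμ E).lt_or_eq with h | h
  · exact h
  · exfalso
    have h0 : ∀ v ∈ E.image Prod.fst, μ v = 0 :=
      (sum_eq_zero_iff_of_nonneg fun v _ => hμ v).mp h.symm
    have : wgt μ ν E = 0 := sum_eq_zero fun e he => by
      rw [h0 e.1 (mem_image_of_mem _ he), zero_mul]
    linarith

private lemma msB_pos (hν : ∀ w, 0 ≤ ν w) {E : Finset (V × W)} (hw : 0 < wgt μ ν E) :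
    0 < msB ν E := by
  rcases (msB_nonneg hν E).lt_or_eq with h | h
  · exact h
  · exfalso
    have h0 : ∀ w ∈ E.image Prod.snd, ν w = 0 :=
      (sum_eq_zero_iff_of_nonneg fun w _ => hν w).mp h.symm
    have : wgt μ ν E = 0 := sum_eq_zero fun e he => by
      rw [h0 e.2 (mem_image_of_mem _ he), mul_zero]
    linarith

/-- Removal step on the V side. -/
private lemma step_fst (hμ : ∀ v, 0 ≤ μ v) (hν : ∀ w, 0 ≤ ν w)
    {E : Finset (V × W)} {v : V} (hv : v ∈ E.image Prod.fst)
    (hw : 0 < wgt μ ν E)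
    (hd : ∑ e ∈ E.filter (fun e => e.1 = v), ν e.2 < 1 / 2 * wgt μ ν E / msA μ E) :
    (E.filter (fun e => e.1 ≠ v)) ⊂ E ∧ 0 < wgt μ ν (E.filter (fun e => e.1 ≠ v)) ∧
      wgt μ ν E / Real.sqrt (msA μ E * msB ν E) ≤
        wgt μ ν (E.filter (fun e => e.1 ≠ v)) /
          Real.sqrt (msA μ (E.filter (fun e => e.1 ≠ v)) * msB ν (E.filter (fun e => e.1 ≠ v))) := by
  set E₂ := E.filter (fun e => e.1 ≠ v) with hE₂
  set w := wgt μ ν E with hwdef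
  set a := msA μ E with hadef
  set b := msB ν E with hbdef
  set t := μ v with htdef
  set d := ∑ e ∈ E.filter (fun e => e.1 = v), ν e.2 with hddef
  have ha : 0 < a := msA_pos hμ hw
  have hb : 0 < b := msB_pos hν hw
  have ht0 : 0 ≤ t := hμ v
  have hta : t ≤ a := single_le_sum (fun i _ => hμ i) hv
  have hd0 : 0 ≤ d := sum_nonneg fun _ _ => hν _
  -- split of weight
  have hsplit : w = wgt μ ν E₂ + t * d := by
    have h1 : ∑ e ∈ E.filter (fun e => e.1 = v), μ e.1 * ν e.2 = t * d := by
      rw [hddef, mul_sum]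
      exact sum_congr rfl fun e he => by rw [(mem_filter.mp he).2]
    have := sum_filter_add_sum_filter_not E (fun e => e.1 = v) (fun e => μ e.1 * ν e.2)
    rw [hwdef, wgt, ← this, h1, wgt]
    ring
  have hda : d * a < 1 / 2 * w := (lt_div_iff₀ ha).mp hd
  -- w₂ lower bound
  have hw2a : wgt μ ν E₂ * a ≥ w * a - t * w / 2 := by
    have h1 : t * (d * a) ≤ t * (1 / 2 * w) := mul_le_mul_of_nonneg_left hda.le ht0
    nlinarith [hsplit]
  have hw2pos : 0 < wgt μ ν E₂ := by
    by_contra hc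
    push_neg at hc
    nlinarith [mul_nonpos_of_nonpos_of_nonneg hc ha.le, mul_pos hw ha,
      mul_le_mul_of_nonneg_right hta hw.le]
  have ha2 : msA μ E₂ ≤ a - t := by
    have hsub : E₂.image Prod.fst ⊆ (E.image Prod.fst).erase v := by
      intro x hx
      obtain ⟨e, he, rfl⟩ := mem_image.mp hx
      exact mem_erase.mpr ⟨(mem_filter.mp he).2, mem_image_of_mem _ (mem_filter.mp he).1⟩
    calc msA μ E₂ ≤ ∑ x ∈ (E.image Prod.fst).erase v, μ x :=
          sum_le_sum_of_subset_of_nonneg hsub fun i _ _ => hμ i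
      _ = a - t := by rw [sum_erase_eq_sub hv]; rfl
  have hb2 : msB ν E₂ ≤ b := by
    apply sum_le_sum_of_subset_of_nonneg _ fun i _ _ => hν i
    exact image_subset_image (filter_subset _ _)
  have ha2pos : 0 < msA μ E₂ := msA_pos hμ hw2pos
  have hb2pos : 0 < msB ν E₂ := msB_pos hν hw2pos
  have hatpos : 0 < a - t := lt_of_lt_of_le ha2pos ha2
  refine ⟨?_, hw2pos, ?_⟩
  · refine (filter_subset _ _).ssubset_of_ne ?_
    intro hEq
    obtain ⟨e, he, rfl⟩ := mem_image.mp hv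
    have : e ∈ E₂ := by rw [hE₂, hEq]; exact he
    exact (mem_filter.mp this).2 rfl
  · rw [div_le_div_iff₀ (Real.sqrt_pos.mpr (mul_pos ha hb))
      (Real.sqrt_pos.mpr (mul_pos ha2pos hb2pos))]
    have key : w * Real.sqrt (a - t) ≤ wgt μ ν E₂ * Real.sqrt a := by
      rw [show w * Real.sqrt (a - t) = Real.sqrt (w ^ 2 * (a - t)) by
            rw [Real.sqrt_mul (sq_nonneg w), Real.sqrt_sq hw.le],
          show wgt μ ν E₂ * Real.sqrt a = Real.sqrt ((wgt μ ν E₂) ^ 2 * a) by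
            rw [Real.sqrt_mul (sq_nonneg _), Real.sqrt_sq hw2pos.le]]
      apply Real.sqrt_le_sqrt
      have hsq : (w * (a - t / 2)) ^ 2 ≤ (wgt μ ν E₂ * a) ^ 2 := by
        have h1 : 0 ≤ w * (a - t / 2) := by nlinarith
        have h2 : w * (a - t / 2) ≤ wgt μ ν E₂ * a := by nlinarith
        nlinarith
      nlinarith [sq_nonneg (w * t), mul_pos ha ha]
    calc w * Real.sqrt (msA μ E₂ * msB ν E₂)
        ≤ w * Real.sqrt ((a - t) * b) := by
          apply mul_le_mul_of_nonneg_left _ hw.le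
          apply Real.sqrt_le_sqrt
          exact mul_le_mul ha2 hb2 hb2pos.le hatpos.le
      _ = w * Real.sqrt (a - t) * Real.sqrt b := by
          rw [Real.sqrt_mul hatpos.le, mul_assoc]
      _ ≤ wgt μ ν E₂ * Real.sqrt a * Real.sqrt b :=
          mul_le_mul_of_nonneg_right key (Real.sqrt_nonneg _)
      _ = wgt μ ν E₂ * Real.sqrt (a * b) := by
          rw [Real.sqrt_mul ha.le, mul_assoc]

/-- Removal step on the W side. -/
private lemma step_snd (hμ : ∀ v, 0 ≤ μ v) (hν : ∀ w, 0 ≤ ν w)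
    {E : Finset (V × W)} {x : W} (hx : x ∈ E.image Prod.snd)
    (hw : 0 < wgt μ ν E)
    (hd : ∑ e ∈ E.filter (fun e => e.2 = x), μ e.1 < 1 / 2 * wgt μ ν E / msB ν E) :
    (E.filter (fun e => e.2 ≠ x)) ⊂ E ∧ 0 < wgt μ ν (E.filter (fun e => e.2 ≠ x)) ∧
      wgt μ ν E / Real.sqrt (msA μ E * msB ν E) ≤
        wgt μ ν (E.filter (fun e => e.2 ≠ x)) /
          Real.sqrt (msA μ (E.filter (fun e => e.2 ≠ x)) * msB ν (E.filter (fun e => e.2 ≠ x))) := by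
  set E₂ := E.filter (fun e => e.2 ≠ x) with hE₂
  set w := wgt μ ν E with hwdef
  set a := msA μ E with hadef
  set b := msB ν E with hbdef
  set t := ν x with htdef
  set d := ∑ e ∈ E.filter (fun e => e.2 = x), μ e.1 with hddef
  have ha : 0 < a := msA_pos hμ hw
  have hb : 0 < b := msB_pos hν hw
  have ht0 : 0 ≤ t := hν x
  have hta : t ≤ b := single_le_sum (fun i _ => hν i) hx
  have hd0 : 0 ≤ d := sum_nonneg fun _ _ => hμ _
  have hsplit : w = wgt μ ν E₂ + t * d := by
    have h1 : ∑ e ∈ E.filter (fun e => e.2 = x), μ e.1 * ν e.2 = t * d := by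
      rw [hddef, mul_sum]
      exact sum_congr rfl fun e he => by rw [(mem_filter.mp he).2]; ring
    have := sum_filter_add_sum_filter_not E (fun e => e.2 = x) (fun e => μ e.1 * ν e.2)
    rw [hwdef, wgt, ← this, h1, wgt]
    ring
  have hda : d * b < 1 / 2 * w := (lt_div_iff₀ hb).mp hd
  have hw2a : wgt μ ν E₂ * b ≥ w * b - t * w / 2 := by
    have h1 : t * (d * b) ≤ t * (1 / 2 * w) := mul_le_mul_of_nonneg_left hda.le ht0
    nlinarith [hsplit]
  have hw2pos : 0 < wgt μ ν E₂ := by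
    by_contra hc
    push_neg at hc
    nlinarith [mul_nonpos_of_nonpos_of_nonneg hc hb.le, mul_pos hw hb,
      mul_le_mul_of_nonneg_right hta hw.le]
  have hb2 : msB ν E₂ ≤ b - t := by
    have hsub : E₂.image Prod.snd ⊆ (E.image Prod.snd).erase x := by
      intro y hy
      obtain ⟨e, he, rfl⟩ := mem_image.mp hy
      exact mem_erase.mpr ⟨(mem_filter.mp he).2, mem_image_of_mem _ (mem_filter.mp he).1⟩
    calc msB ν E₂ ≤ ∑ y ∈ (E.image Prod.snd).erase x, ν y :=
          sum_le_sum_of_subset_of_nonneg hsub fun i _ _ => hν i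
      _ = b - t := by rw [sum_erase_eq_sub hx]; rfl
  have ha2 : msA μ E₂ ≤ a := by
    apply sum_le_sum_of_subset_of_nonneg _ fun i _ _ => hμ i
    exact image_subset_image (filter_subset _ _)
  have ha2pos : 0 < msA μ E₂ := msA_pos hμ hw2pos
  have hb2pos : 0 < msB ν E₂ := msB_pos hν hw2pos
  have hbtpos : 0 < b - t := lt_of_lt_of_le hb2pos hb2
  refine ⟨?_, hw2pos, ?_⟩
  · refine (filter_subset _ _).ssubset_of_ne ?_
    intro hEq
    obtain ⟨e, he, rfl⟩ := mem_image.mp hx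
    have : e ∈ E₂ := by rw [hE₂, hEq]; exact he
    exact (mem_filter.mp this).2 rfl
  · rw [div_le_div_iff₀ (Real.sqrt_pos.mpr (mul_pos ha hb))
      (Real.sqrt_pos.mpr (mul_pos ha2pos hb2pos))]
    have key : w * Real.sqrt (b - t) ≤ wgt μ ν E₂ * Real.sqrt b := by
      rw [show w * Real.sqrt (b - t) = Real.sqrt (w ^ 2 * (b - t)) by
            rw [Real.sqrt_mul (sq_nonneg w), Real.sqrt_sq hw.le],
          show wgt μ ν E₂ * Real.sqrt b = Real.sqrt ((wgt μ ν E₂) ^ 2 * b) by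
            rw [Real.sqrt_mul (sq_nonneg _), Real.sqrt_sq hw2pos.le]]
      apply Real.sqrt_le_sqrt
      have hsq : (w * (b - t / 2)) ^ 2 ≤ (wgt μ ν E₂ * b) ^ 2 := by
        have h1 : 0 ≤ w * (b - t / 2) := by nlinarith
        have h2 : w * (b - t / 2) ≤ wgt μ ν E₂ * b := by nlinarith
        nlinarith
      nlinarith [sq_nonneg (w * t), mul_pos hb hb]
    calc w * Real.sqrt (msA μ E₂ * msB ν E₂)
        ≤ w * Real.sqrt (a * (b - t)) := by
          apply mul_le_mul_of_nonneg_left _ hw.le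
          apply Real.sqrt_le_sqrt
          exact mul_le_mul ha2 hb2 hb2pos.le ha.le
      _ = Real.sqrt a * (w * Real.sqrt (b - t)) := by
          rw [Real.sqrt_mul ha.le]; ring
      _ ≤ Real.sqrt a * (wgt μ ν E₂ * Real.sqrt b) :=
          mul_le_mul_of_nonneg_left key (Real.sqrt_nonneg _)
      _ = wgt μ ν E₂ * Real.sqrt (a * b) := by
          rw [Real.sqrt_mul ha.le]; ring

private lemma pp_aux (hμ : ∀ v, 0 ≤ μ v) (hν : ∀ w, 0 ≤ ν w) :
    ∀ n : ℕ, ∀ E : Finset (V × W), E.card ≤ n → 0 < wgt μ ν E →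
    ∃ E' : Finset (V × W), E' ⊆ E ∧ E'.Nonempty ∧
      wgt μ ν E / Real.sqrt (msA μ E * msB ν E) ≤
        wgt μ ν E' / Real.sqrt (msA μ E' * msB ν E') ∧
      (∀ v ∈ E'.image Prod.fst,
        1 / 2 * wgt μ ν E' / msA μ E' ≤ ∑ e ∈ E'.filter (fun e => e.1 = v), ν e.2) ∧
      (∀ x ∈ E'.image Prod.snd,
        1 / 2 * wgt μ ν E' / msB ν E' ≤ ∑ e ∈ E'.filter (fun e => e.2 = x), μ e.1) := by
  intro n
  induction n with
  | zero =>
    intro E hcard hw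
    rw [Nat.le_zero, card_eq_zero] at hcard
    subst hcard
    simp [wgt] at hw
  | succ n ih =>
    intro E hcard hw
    by_cases hgood : (∀ v ∈ E.image Prod.fst,
        1 / 2 * wgt μ ν E / msA μ E ≤ ∑ e ∈ E.filter (fun e => e.1 = v), ν e.2) ∧
        (∀ x ∈ E.image Prod.snd,
        1 / 2 * wgt μ ν E / msB ν E ≤ ∑ e ∈ E.filter (fun e => e.2 = x), μ e.1)
    · refine ⟨E, Subset.rfl, ?_, le_refl _, hgood.1, hgood.2⟩
      rcases E.eq_empty_or_nonempty with rfl | h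
      · simp [wgt] at hw
      · exact h
    · rw [not_and_or] at hgood
      rcases hgood with hbad | hbad
      · push_neg at hbad
        obtain ⟨v, hv, hdeg⟩ := hbad
        obtain ⟨hss, hw2, hratio⟩ := step_fst hμ hν hv hw hdeg
        obtain ⟨E', hsub, hne, hr, hd1, hd2⟩ :=
          ih (E.filter (fun e => e.1 ≠ v))
            (Nat.le_of_lt_succ (lt_of_lt_of_le (card_lt_card hss) hcard)) hw2
        exact ⟨E', hsub.trans (filter_subset _ _), hne, hratio.trans hr, hd1, hd2⟩
      · push_neg at hbad
        obtain ⟨x, hx, hdeg⟩ := hbad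
        obtain ⟨hss, hw2, hratio⟩ := step_snd hμ hν hx hw hdeg
        obtain ⟨E', hsub, hne, hr, hd1, hd2⟩ :=
          ih (E.filter (fun e => e.2 ≠ x))
            (Nat.le_of_lt_succ (lt_of_lt_of_le (card_lt_card hss) hcard)) hw2
        exact ⟨E', hsub.trans (filter_subset _ _), hne, hratio.trans hr, hd1, hd2⟩

end PP

theorem popularity_principle {V W : Type*} [Fintype V] [Fintype W]
    [DecidableEq V] [DecidableEq W]
    (E : Finset (V × W)) (μ : V → ℝ) (ν : W → ℝ)
    (hμ : ∀ v, 0 ≤ μ v) (hν : ∀ w, 0 ≤ ν w)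
    (hμpos : 0 < ∑ v, μ v) (hνpos : 0 < ∑ w, ν w) (hE : E.Nonempty) :
    ∃ E' : Finset (V × W), E' ⊆ E ∧ E'.Nonempty ∧
      (∑ e ∈ E', μ e.1 * ν e.2) /
          Real.sqrt ((∑ v ∈ E'.image Prod.fst, μ v) * (∑ w ∈ E'.image Prod.snd, ν w)) ≥
        (∑ e ∈ E, μ e.1 * ν e.2) / Real.sqrt ((∑ v, μ v) * (∑ w, ν w)) ∧
      (∀ v ∈ E'.image Prod.fst,
        (∑ e ∈ E'.filter (fun e => e.1 = v), ν e.2) ≥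
          (1 / 2) * (∑ e ∈ E', μ e.1 * ν e.2) / (∑ v ∈ E'.image Prod.fst, μ v)) ∧
      (∀ w ∈ E'.image Prod.snd,
        (∑ e ∈ E'.filter (fun e => e.2 = w), μ e.1) ≥
          (1 / 2) * (∑ e ∈ E', μ e.1 * ν e.2) / (∑ w ∈ E'.image Prod.snd, ν w)) := by
  rcases (wgt_nonneg hμ hν E).lt_or_eq with hw | hw
  · obtain ⟨E', hsub, hne, hr, hd1, hd2⟩ := pp_aux hμ hν E.card E le_rfl hw
    refine ⟨E', hsub, hne, ?_, hd1, hd2⟩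
    refine le_trans ?_ hr
    have hA : msA μ E ≤ ∑ v, μ v :=
      sum_le_sum_of_subset_of_nonneg (subset_univ _) fun i _ _ => hμ i
    have hB : msB ν E ≤ ∑ w, ν w :=
      sum_le_sum_of_subset_of_nonneg (subset_univ _) fun i _ _ => hν i
    have h3 : 0 < Real.sqrt (msA μ E * msB ν E) :=
      Real.sqrt_pos.mpr (mul_pos (msA_pos hμ hw) (msB_pos hν hw))
    have h2 : Real.sqrt (msA μ E * msB ν E) ≤ Real.sqrt ((∑ v, μ v) * (∑ w, ν w)) :=
      Real.sqrt_le_sqrt (mul_le_mul hA hB (msB_nonneg hν E) hμpos.le)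
    exact div_le_div_of_nonneg_left hw.le h3 h2
  · -- zero weight: take E' = E
    refine ⟨E, Subset.rfl, hE, ?_, ?_, ?_⟩
    · rw [show (∑ e ∈ E, μ e.1 * ν e.2) = 0 from hw.symm]
      simp
    · intro v _
      rw [show (∑ e ∈ E, μ e.1 * ν e.2) = 0 from hw.symm]
      simp only [mul_zero, zero_div, ge_iff_le]
      exact sum_nonneg fun _ _ => hν _
    · intro x _
      rw [show (∑ e ∈ E, μ e.1 * ν e.2) = 0 from hw.symm]
      simp only [mul_zero, zero_div, ge_iff_le]
      exact sum_nonneg fun _ _ => hμ _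
end

section
/- Let q, r be positive integers, and let D = max(q·ψ(r), r·ψ(q))/gcd(q,r) for reals ψ(q), ψ(r) ∈ (0, 1/2]. Suppose j ≥ 1 is an integer such that ∑_{p | qr/gcd(q,r)², p > e^{j+1}} 1/p ≤ 10, and D ≤ e^j. Then ∏_{p | qr/gcd(q,r)², p > D} (1 + 1/p) ≤ K·j for an absolute constant K, where products/sums are over primes. -/
open Finset

-- Chebyshev: sum of log p over primes ≤ N
private lemma theta_le (N : ℕ) :
    ∑ p ∈ (range (N + 1)).filter Nat.Prime, Real.log p ≤ N * Real.log 4 := by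
  have h4 : (primorial N : ℝ) ≤ (4 : ℝ) ^ N := by
    exact_mod_cast primorial_le_4_pow N
  have hlog : Real.log (primorial N) ≤ N * Real.log 4 := by
    calc Real.log (primorial N) ≤ Real.log ((4:ℝ) ^ N) :=
          Real.log_le_log (by exact_mod_cast primorial_pos N) h4
      _ = N * Real.log 4 := by rw [Real.log_pow]
  refine le_trans (le_of_eq ?_) hlog
  rw [primorial]
  push_cast
  rw [Real.log_prod]
  intro p hp
  have := (Finset.mem_filter.mp hp).2.pos
  positivity

private lemma prod_pow_dvd (N : ℕ) :
    (∏ p ∈ (range (N + 1)).filter Nat.Prime, p ^ (N / p)) ∣ Nat.factorial N := by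
  apply Finset.prod_dvd_of_isRelPrime
  · intro p hp q hq hpq
    simp only [Finset.coe_filter, Set.mem_setOf_eq] at hp hq
    simp only [Function.onFun]
    intro d hd1 hd2
    have hc : Nat.Coprime (p ^ (N / p)) (q ^ (N / q)) :=
      Nat.Coprime.pow _ _ ((Nat.coprime_primes hp.2 hq.2).mpr hpq)
    rw [Nat.isUnit_iff, ← Nat.dvd_one, ← hc]
    exact Nat.dvd_gcd hd1 hd2
  · intro p hp
    have hp' : p.Prime := (Finset.mem_filter.mp hp).2
    rw [Nat.Prime.pow_dvd_factorial_iff hp' (Nat.lt_succ_self _)]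
    rcases Nat.eq_zero_or_pos (N / p) with h | h
    · simp [h]
    · have h1 : 1 ∈ Finset.Ico 1 (Nat.log p N + 1) := by
        simp only [Finset.mem_Ico]
        refine ⟨le_refl _, ?_⟩
        have : 1 ≤ Nat.log p N := by
          apply Nat.le_log_of_pow_le hp'.one_lt
          simpa using (Nat.le_div_iff_mul_le hp'.pos).mp h
        omega
      calc N / p = N / p ^ 1 := by rw [pow_one]
        _ ≤ ∑ i ∈ Finset.Ico 1 (Nat.log p N + 1), N / p ^ i :=
            Finset.single_le_sum (f := fun i => N / p ^ i) (fun i _ => Nat.zero_le _) h1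

private lemma mertens1 (N : ℕ) (hN : 1 ≤ N) :
    ∑ p ∈ (range (N + 1)).filter Nat.Prime, Real.log p / p ≤ Real.log N + Real.log 4 := by
  set S := (range (N + 1)).filter Nat.Prime with hS
  have hNpos : (0:ℝ) < N := by exact_mod_cast hN
  -- log of the dividing product
  have hdvd := prod_pow_dvd N
  have hfacpos : 0 < Nat.factorial N := Nat.factorial_pos N
  have hTle : (∏ p ∈ S, (p:ℕ) ^ (N / p) : ℕ) ≤ Nat.factorial N :=
    Nat.le_of_dvd hfacpos hdvd
  have hlogT : ∑ p ∈ S, ((N / p : ℕ) : ℝ) * Real.log p ≤ (N:ℝ) * Real.log N := by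
    have h1 : Real.log (∏ p ∈ S, (p:ℕ) ^ (N / p) : ℕ) ≤ Real.log (Nat.factorial N) :=
      Real.log_le_log (by
        have : 0 < ∏ p ∈ S, (p:ℕ) ^ (N / p) :=
          Finset.prod_pos fun p hp => pow_pos (Finset.mem_filter.mp hp).2.pos _
        exact_mod_cast this) (by exact_mod_cast hTle)
    have h2 : Real.log (Nat.factorial N) ≤ (N:ℝ) * Real.log N := by
      calc Real.log (Nat.factorial N) ≤ Real.log ((N:ℝ) ^ N) :=
            Real.log_le_log (by exact_mod_cast hfacpos) (by exact_mod_cast Nat.factorial_le_pow N)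
        _ = (N:ℝ) * Real.log N := by rw [Real.log_pow]
    refine le_trans (le_of_eq ?_) (le_trans h1 h2)
    push_cast
    rw [Real.log_prod]
    · refine Finset.sum_congr rfl fun p hp => ?_
      rw [Real.log_pow]
    · intro p hp
      have := (Finset.mem_filter.mp hp).2.pos
      positivity
  have key : ∑ p ∈ S, (N:ℝ) / p * Real.log p ≤ (N:ℝ) * Real.log N + (N:ℝ) * Real.log 4 := by
    have hsplit : ∀ p ∈ S, (N:ℝ) / p * Real.log p
        ≤ ((N / p : ℕ) : ℝ) * Real.log p + Real.log p := by
      intro p hp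
      have hp' : Nat.Prime p := (Finset.mem_filter.mp hp).2
      have hppos : (0:ℝ) < p := by exact_mod_cast hp'.pos
      have hlogp : 0 ≤ Real.log p := Real.log_nonneg (by exact_mod_cast hp'.one_le)
      have hfloor : (N:ℝ) / p ≤ ((N / p : ℕ) : ℝ) + 1 := by
        rw [div_le_iff₀ hppos]
        have h1 : N ≤ p * (N / p) + p := by
          have h2 := Nat.div_add_mod N p
          have h3 := Nat.mod_lt N hp'.pos
          omega
        calc (N:ℝ) ≤ ((p * (N / p) + p : ℕ) : ℝ) := by exact_mod_cast h1
          _ = (((N / p : ℕ) : ℝ) + 1) * p := by push_cast; ring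
      nlinarith
    calc ∑ p ∈ S, (N:ℝ) / p * Real.log p
        ≤ ∑ p ∈ S, (((N / p : ℕ) : ℝ) * Real.log p + Real.log p) :=
          Finset.sum_le_sum hsplit
      _ = (∑ p ∈ S, ((N / p : ℕ) : ℝ) * Real.log p) + ∑ p ∈ S, Real.log p := by
          rw [Finset.sum_add_distrib]
      _ ≤ (N:ℝ) * Real.log N + (N:ℝ) * Real.log 4 := by
          have := theta_le N
          exact add_le_add hlogT this
  have : ∑ p ∈ S, Real.log p / p = (1 / N) * ∑ p ∈ S, (N:ℝ) / p * Real.log p := by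
    rw [Finset.mul_sum]
    refine Finset.sum_congr rfl fun p hp => ?_
    field_simp
  rw [this]
  rw [one_div, inv_mul_le_iff₀ hNpos]
  calc ∑ p ∈ S, (N:ℝ) / p * Real.log p ≤ (N:ℝ) * Real.log N + (N:ℝ) * Real.log 4 := key
    _ = (N:ℝ) * (Real.log N + Real.log 4) := by ring

private lemma tele_Ico (f : ℕ → ℝ) (a b : ℕ) (h : a ≤ b) :
    ∑ n ∈ Ico a b, (f n - f (n + 1)) = f a - f b := by
  rw [Finset.sum_Ico_eq_sum_range]
  have h2 := Finset.sum_range_sub' (fun i => f (a + i)) (b - a)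
  simp only [← add_assoc, add_zero] at h2
  rw [h2]
  congr 2
  omega

noncomputable def mertensC : ℝ :=
  1 + Real.log 4 / Real.log 2 * 2 - Real.log (Real.log 2)

private lemma mertens2 (N : ℕ) (hN : 2 ≤ N) :
    ∑ p ∈ (range (N + 1)).filter Nat.Prime, 1 / (p:ℝ)
      ≤ Real.log (Real.log N) + mertensC := by
  have hlog2 : (0:ℝ) < Real.log 2 := Real.log_pos (by norm_num)
  have hlogn : ∀ n : ℕ, 2 ≤ n → (0:ℝ) < Real.log n := fun n hn =>
    Real.log_pos (by exact_mod_cast hn)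
  have hlogN : (0:ℝ) < Real.log N := hlogn N hN
  have hlog4 : (0:ℝ) ≤ Real.log 4 := Real.log_nonneg (by norm_num)
  set W : ℕ → ℝ := fun n => ∑ p ∈ (range (n + 1)).filter Nat.Prime, Real.log p / p with hW
  set Δ : ℕ → ℝ := fun n => 1 / Real.log n - 1 / Real.log ((n + 1 : ℕ) : ℝ) with hΔ
  have hmono : ∀ n : ℕ, 2 ≤ n → Real.log n ≤ Real.log ((n + 1 : ℕ) : ℝ) := by
    intro n hn
    apply Real.log_le_log (by exact_mod_cast Nat.lt_of_lt_of_le Nat.zero_lt_two hn)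
    exact_mod_cast Nat.le_succ n
  have hΔpos : ∀ n : ℕ, 2 ≤ n → 0 ≤ Δ n := by
    intro n hn
    have h1 := hlogn n hn
    have h2 := hmono n hn
    have h3 : (0:ℝ) < Real.log ((n + 1 : ℕ) : ℝ) := lt_of_lt_of_le h1 h2
    simp only [hΔ, sub_nonneg]
    exact one_div_le_one_div_of_le h1 h2
  -- Step 1: Abel decomposition of each 1/p
  have step1 : ∀ p ∈ (range (N + 1)).filter Nat.Prime,
      1 / (p:ℝ) = Real.log p / p * (1 / Real.log N)
        + ∑ n ∈ Ico p N, Real.log p / p * Δ n := by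
    intro p hp
    obtain ⟨hpN, hpp⟩ := Finset.mem_filter.mp hp
    rw [Finset.mem_range] at hpN
    have hp2 : 2 ≤ p := hpp.two_le
    have hpN' : p ≤ N := by omega
    have htel : ∑ n ∈ Ico p N, Δ n = 1 / Real.log p - 1 / Real.log N :=
      tele_Ico (fun n => 1 / Real.log n) p N hpN'
    have hlogp : (0:ℝ) < Real.log p := hlogn p hp2
    have hppos : (0:ℝ) < p := by exact_mod_cast hpp.pos
    rw [← Finset.mul_sum, htel, ← mul_add]
    have he : 1 / Real.log N + (1 / Real.log (p:ℝ) - 1 / Real.log N) = 1 / Real.log p := by ring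
    rw [he, div_mul_div_comm, mul_one, mul_comm (p:ℝ) (Real.log p), ← div_div,
      div_self hlogp.ne']
  -- Step 2 + 3: sum and swap
  have step3 : ∑ p ∈ (range (N + 1)).filter Nat.Prime, ∑ n ∈ Ico p N, Real.log p / p * Δ n
      = ∑ n ∈ Ico 2 N, Δ n * W n := by
    have e1 : ∀ p ∈ (range (N + 1)).filter Nat.Prime,
        ∑ n ∈ Ico p N, Real.log p / p * Δ n
          = ∑ n ∈ Ico 2 N, if p ≤ n then Real.log p / p * Δ n else 0 := by
      intro p hp
      have hp2 : 2 ≤ p := (Finset.mem_filter.mp hp).2.two_le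
      rw [← Finset.sum_filter]
      congr 1
      ext n
      simp only [Finset.mem_filter, Finset.mem_Ico]
      omega
    rw [Finset.sum_congr rfl e1, Finset.sum_comm]
    refine Finset.sum_congr rfl fun n hn => ?_
    rw [Finset.mem_Ico] at hn
    rw [← Finset.sum_filter]
    have hset : ((range (N + 1)).filter Nat.Prime).filter (fun p => p ≤ n)
        = (range (n + 1)).filter Nat.Prime := by
      ext p
      simp only [Finset.mem_filter, Finset.mem_range]
      constructor
      · rintro ⟨⟨_, h2⟩, h3⟩; exact ⟨by omega, h2⟩
      · rintro ⟨h1, h2⟩; exact ⟨⟨by omega, h2⟩, by omega⟩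
    rw [hset, hW, Finset.mul_sum]
    exact Finset.sum_congr rfl fun p _ => mul_comm _ _
  -- Step 4: bounds
  have hlog2N : Real.log 2 ≤ Real.log N := by
    apply Real.log_le_log (by norm_num)
    exact_mod_cast hN
  have hA : W N * (1 / Real.log N) ≤ 1 + Real.log 4 / Real.log 2 := by
    have h1 : W N * (1 / Real.log N) ≤ (Real.log N + Real.log 4) * (1 / Real.log N) :=
      mul_le_mul_of_nonneg_right (mertens1 N (by omega)) (by positivity)
    have h2 : (Real.log N + Real.log 4) * (1 / Real.log N) = 1 + Real.log 4 / Real.log N := by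
      field_simp
    have h3 : Real.log 4 / Real.log N ≤ Real.log 4 / Real.log 2 := by
      apply div_le_div_of_nonneg_left hlog4 hlog2 hlog2N
    linarith
  have keyn : ∀ n ∈ Ico 2 N, Δ n * W n ≤
      (Real.log (Real.log ((n + 1 : ℕ) : ℝ)) - Real.log (Real.log n)) + Real.log 4 * Δ n := by
    intro n hn
    rw [Finset.mem_Ico] at hn
    have h2n := hn.1
    have ha := hlogn n h2n
    have hb : (0:ℝ) < Real.log ((n + 1 : ℕ) : ℝ) := lt_of_lt_of_le ha (hmono n h2n)
    have hWn : W n ≤ Real.log n + Real.log 4 := mertens1 n (by omega)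
    have hΔn := hΔpos n h2n
    have h1 : Δ n * W n ≤ Δ n * (Real.log n + Real.log 4) :=
      mul_le_mul_of_nonneg_left hWn hΔn
    have h2 : Δ n * Real.log n
        ≤ Real.log (Real.log ((n + 1 : ℕ) : ℝ)) - Real.log (Real.log n) := by
      have hx : (0:ℝ) < Real.log n / Real.log ((n + 1 : ℕ) : ℝ) := div_pos ha hb
      have hle := Real.log_le_sub_one_of_pos hx
      rw [Real.log_div ha.ne' hb.ne'] at hle
      have hΔln : Δ n * Real.log n = 1 - Real.log n / Real.log ((n + 1 : ℕ) : ℝ) := by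
        simp only [hΔ]
        field_simp
      rw [hΔln]
      linarith
    nlinarith
  have hBtel : ∑ n ∈ Ico 2 N, (Real.log (Real.log ((n + 1 : ℕ) : ℝ)) - Real.log (Real.log n))
      = Real.log (Real.log N) - Real.log (Real.log 2) := by
    have := tele_Ico (fun n => - Real.log (Real.log n)) 2 N hN
    have h2 : ∀ n : ℕ, (- Real.log (Real.log n) - - Real.log (Real.log ((n + 1 : ℕ) : ℝ)))
        = Real.log (Real.log ((n + 1 : ℕ) : ℝ)) - Real.log (Real.log n) := fun n => by ring
    simp only [h2] at this
    rw [this]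
    norm_num
    ring
  have hΔtel : ∑ n ∈ Ico 2 N, Δ n = 1 / Real.log 2 - 1 / Real.log N := by
    have := tele_Ico (fun n => 1 / Real.log n) 2 N hN
    simp only [hΔ]
    rw [this]
    norm_num
  have hB : ∑ n ∈ Ico 2 N, Δ n * W n
      ≤ (Real.log (Real.log N) - Real.log (Real.log 2)) + Real.log 4 / Real.log 2 := by
    calc ∑ n ∈ Ico 2 N, Δ n * W n
        ≤ ∑ n ∈ Ico 2 N, ((Real.log (Real.log ((n + 1 : ℕ) : ℝ)) - Real.log (Real.log n))
            + Real.log 4 * Δ n) := Finset.sum_le_sum keyn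
      _ = (Real.log (Real.log N) - Real.log (Real.log 2))
            + Real.log 4 * (1 / Real.log 2 - 1 / Real.log N) := by
          rw [Finset.sum_add_distrib, hBtel, ← Finset.mul_sum, hΔtel]
      _ ≤ (Real.log (Real.log N) - Real.log (Real.log 2)) + Real.log 4 / Real.log 2 := by
          have h1 : (0:ℝ) ≤ 1 / Real.log N := by positivity
          have h2 : Real.log 4 * (1 / Real.log 2 - 1 / Real.log N)
              ≤ Real.log 4 * (1 / Real.log 2) := by nlinarith
          rw [mul_one_div] at h2
          linarith
  calc ∑ p ∈ (range (N + 1)).filter Nat.Prime, 1 / (p:ℝ)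
      = W N * (1 / Real.log N) + ∑ n ∈ Ico 2 N, Δ n * W n := by
        rw [Finset.sum_congr rfl step1, Finset.sum_add_distrib, step3, ← Finset.sum_mul]
    _ ≤ (1 + Real.log 4 / Real.log 2)
          + ((Real.log (Real.log N) - Real.log (Real.log 2)) + Real.log 4 / Real.log 2) :=
        add_le_add hA hB
    _ = Real.log (Real.log N) + mertensC := by
        rw [mertensC]; ring

theorem dyadic_overlap_control :
    ∃ K : ℝ, 0 < K ∧
      ∀ (q r : ℕ) (ψq ψr : ℝ) (j : ℕ), 0 < q → 0 < r →
        0 < ψq → ψq ≤ 1 / 2 → 0 < ψr → ψr ≤ 1 / 2 → 1 ≤ j →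
        (∑ p ∈ ((q * r / Nat.gcd q r ^ 2).primeFactors.filter
            (fun p : ℕ => Real.exp (j + 1) < (p : ℝ))), (1 / (p : ℝ))) ≤ 10 →
        max ((q : ℝ) * ψr) ((r : ℝ) * ψq) / (Nat.gcd q r : ℝ) ≤ Real.exp j →
        (∏ p ∈ ((q * r / Nat.gcd q r ^ 2).primeFactors.filter
            (fun p : ℕ => max ((q : ℝ) * ψr) ((r : ℝ) * ψq) / (Nat.gcd q r : ℝ) < (p : ℝ))),
          (1 + 1 / (p : ℝ))) ≤ K * j := by
  refine ⟨Real.exp (mertensC + Real.log 2 + 10), Real.exp_pos _, ?_⟩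
  intro q r ψq ψr j hq hr hψq hψq2 hψr hψr2 hj htop hD
  set n := q * r / Nat.gcd q r ^ 2 with hn
  set D := max ((q : ℝ) * ψr) ((r : ℝ) * ψq) / (Nat.gcd q r : ℝ) with hDdef
  set S := n.primeFactors.filter (fun p : ℕ => D < (p:ℝ)) with hSdef
  have hjpos : (0:ℝ) < j := by exact_mod_cast hj
  have hprimepos : ∀ p ∈ S, (0:ℝ) < (p:ℝ) := fun p hp => by
    exact_mod_cast (Nat.prime_of_mem_primeFactors (Finset.mem_filter.mp hp).1).pos
  have hprod_exp : (∏ p ∈ S, (1 + 1/(p:ℝ))) ≤ Real.exp (∑ p ∈ S, 1/(p:ℝ)) := by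
    rw [Real.exp_sum]
    apply Finset.prod_le_prod
    · intro p hp
      have := hprimepos p hp
      positivity
    · intro p hp
      have := Real.add_one_le_exp (1/(p:ℝ))
      linarith
  set N := ⌊Real.exp ((j:ℝ) + 1)⌋₊ with hNdef
  have hexp3 : (3:ℝ) ≤ Real.exp ((j:ℝ) + 1) := by
    have h1 := Real.add_one_le_exp ((j:ℝ) + 1)
    have h2 : (1:ℝ) ≤ j := by exact_mod_cast hj
    linarith
  have hN2 : 2 ≤ N := by
    have : (3:ℕ) ≤ N := Nat.le_floor (by exact_mod_cast hexp3)
    omega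
  have hsplit : ∑ p ∈ S, 1/(p:ℝ)
      = (∑ p ∈ S.filter (fun p : ℕ => (p:ℝ) ≤ Real.exp ((j:ℝ) + 1)), 1/(p:ℝ))
        + ∑ p ∈ S.filter (fun p : ℕ => ¬ (p:ℝ) ≤ Real.exp ((j:ℝ) + 1)), 1/(p:ℝ) :=
    (Finset.sum_filter_add_sum_filter_not S _ _).symm
  have hlow : ∑ p ∈ S.filter (fun p : ℕ => (p:ℝ) ≤ Real.exp ((j:ℝ) + 1)), 1/(p:ℝ)
      ≤ Real.log (Real.log N) + mertensC := by
    refine le_trans (Finset.sum_le_sum_of_subset_of_nonneg ?_ ?_) (mertens2 N hN2)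
    · intro p hp
      obtain ⟨hp1, hp3⟩ := Finset.mem_filter.mp hp
      obtain ⟨hp1', _⟩ := Finset.mem_filter.mp hp1
      refine Finset.mem_filter.mpr ⟨Finset.mem_range.mpr ?_, Nat.prime_of_mem_primeFactors hp1'⟩
      have : p ≤ N := Nat.le_floor hp3
      omega
    · intro p _ _
      positivity
  have hhigh : ∑ p ∈ S.filter (fun p : ℕ => ¬ (p:ℝ) ≤ Real.exp ((j:ℝ) + 1)), 1/(p:ℝ) ≤ 10 := by
    refine le_trans (Finset.sum_le_sum_of_subset_of_nonneg ?_ ?_) htop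
    · intro p hp
      obtain ⟨hp1, hp3⟩ := Finset.mem_filter.mp hp
      obtain ⟨hp1', _⟩ := Finset.mem_filter.mp hp1
      exact Finset.mem_filter.mpr ⟨hp1', not_le.mp hp3⟩
    · intro p hp _
      have hpp : (0:ℝ) < p := by
        exact_mod_cast (Nat.prime_of_mem_primeFactors (Finset.mem_filter.mp hp).1).pos
      positivity
  have hloglog : Real.log (Real.log N) ≤ Real.log 2 + Real.log j := by
    have hNpos : (0:ℝ) < N := by exact_mod_cast Nat.lt_of_lt_of_le Nat.zero_lt_two hN2
    have hlogNpos : (0:ℝ) < Real.log N :=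
      Real.log_pos (by exact_mod_cast Nat.lt_of_lt_of_le Nat.one_lt_two hN2)
    have h1 : Real.log N ≤ (j:ℝ) + 1 := by
      have h2 : (N:ℝ) ≤ Real.exp ((j:ℝ) + 1) := Nat.floor_le (by positivity)
      calc Real.log N ≤ Real.log (Real.exp ((j:ℝ) + 1)) := Real.log_le_log hNpos h2
        _ = (j:ℝ) + 1 := Real.log_exp _
    have h3 : (j:ℝ) + 1 ≤ 2 * j := by
      have : (1:ℝ) ≤ j := by exact_mod_cast hj
      linarith
    calc Real.log (Real.log N) ≤ Real.log (2 * j) :=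
          Real.log_le_log hlogNpos (le_trans h1 h3)
      _ = Real.log 2 + Real.log j := Real.log_mul (by norm_num) hjpos.ne'
  calc (∏ p ∈ S, (1 + 1/(p:ℝ))) ≤ Real.exp (∑ p ∈ S, 1/(p:ℝ)) := hprod_exp
    _ ≤ Real.exp ((Real.log 2 + Real.log j + mertensC) + 10) := by
        apply Real.exp_le_exp.mpr
        rw [hsplit]
        linarith [hlow, hhigh, hloglog]
    _ = Real.exp (mertensC + Real.log 2 + 10) * j := by
        rw [← Real.exp_log hjpos]
        rw [← Real.exp_add]
        congr 1
        rw [Real.log_exp]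
        ring
end
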